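/- arXiv:math/0312418 — 9 statements merged into one kernel-verified Lean document; each statement's English description precedes it below -/
import Mathlib

section
/- The number of s-non-squashing partitions of n equals the number of partitions of n into powers of s, for every integer n ≥ 0 and every integer s ≥ 2. -/
/-- A partition written as a nondecreasing list of positive parts. -/
def IsPartList (l : List ℕ) : Prop :=
  l.Pairwise (· ≤ ·) ∧ ∀ p ∈ l, 0 < p

/-- A partition with distinct parts, written as a strictly increasing list of positive parts. -/
def DistinctPartList (l : List ℕ) : Prop :=
  l.Pairwise (· < ·) ∧ ∀ p ∈ l, 0 < p

/-- The s-non-squashing condition: (s-1)(p₁+⋯+p_j) ≤ p_{j+1} for 1 ≤ j ≤ k-1. -/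
def NSq (s : ℕ) (l : List ℕ) : Prop :=
  ∀ j, 0 < j → j < l.length → (s - 1) * (l.take j).sum ≤ l.getD j 0

namespace NSqAux

def AA (s n : ℕ) : Set (List ℕ) := {l | IsPartList l ∧ NSq s l ∧ l.sum = n}
def BB (s n : ℕ) : Set (List ℕ) := {l | IsPartList l ∧ (∀ p ∈ l, ∃ i, p = s ^ i) ∧ l.sum = n}
def DD (s n : ℕ) : Set (List ℕ) := {l | IsPartList l ∧ NSq s l ∧ s * l.sum ≤ n}

/-! ### Finiteness -/

lemma finite_sum_le (n : ℕ) : {l : List ℕ | (∀ p ∈ l, 0 < p) ∧ l.sum ≤ n}.Finite := by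
  apply Set.Finite.subset ((List.finite_length_le (Fin (n+1)) n).image (List.map Fin.val))
  rintro l ⟨hpos, hsum⟩
  refine ⟨l.map (fun x => ⟨min x n, by omega⟩), ?_, ?_⟩
  · simpa using le_trans (List.length_le_sum_of_one_le l hpos) hsum
  · rw [List.map_map]
    refine (List.map_congr_left fun x hx => ?_).trans (List.map_id l)
    have : x ≤ l.sum := List.le_sum_of_mem hx
    simp only [Function.comp, id_eq]; omega

lemma finA (s n : ℕ) : (AA s n).Finite :=
  (finite_sum_le n).subset (fun l hl => ⟨hl.1.2, hl.2.2.le⟩)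

lemma finB (s n : ℕ) : (BB s n).Finite :=
  (finite_sum_le n).subset (fun l hl => ⟨hl.1.2, hl.2.2.le⟩)

lemma finD (s n : ℕ) (hs : 1 ≤ s) : (DD s n).Finite := by
  refine (finite_sum_le n).subset (fun l hl => ⟨hl.1.2, ?_⟩)
  have := hl.2.2
  have h1 : 1 * l.sum ≤ s * l.sum := Nat.mul_le_mul_right _ hs
  omega

/-! ### Basic lemmas -/

lemma sum_zero_nil {l : List ℕ} (hpos : ∀ p ∈ l, 0 < p) (h : l.sum = 0) : l = [] := by
  cases l with
  | nil => rfl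
  | cons a t => exact absurd (hpos a (by simp)) (by simp at h; omega)

lemma nsq_nil (s : ℕ) : NSq s [] := fun j hj hjl => by simp at hjl

lemma part_nil : IsPartList [] := ⟨List.Pairwise.nil, by simp⟩

lemma A_zero (s : ℕ) : AA s 0 = {[]} := by
  ext l
  simp only [AA, Set.mem_setOf_eq, Set.mem_singleton_iff]
  constructor
  · rintro ⟨⟨_, hpos⟩, _, hsum⟩; exact sum_zero_nil hpos hsum
  · rintro rfl; exact ⟨part_nil, nsq_nil s, rfl⟩

lemma B_zero (s : ℕ) : BB s 0 = {[]} := by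
  ext l
  simp only [BB, Set.mem_setOf_eq, Set.mem_singleton_iff]
  constructor
  · rintro ⟨⟨_, hpos⟩, _, hsum⟩; exact sum_zero_nil hpos hsum
  · rintro rfl; exact ⟨part_nil, by simp, rfl⟩

lemma D_zero (s : ℕ) (hs : 1 ≤ s) : DD s 0 = {[]} := by
  ext l
  simp only [DD, Set.mem_setOf_eq, Set.mem_singleton_iff]
  constructor
  · rintro ⟨⟨_, hpos⟩, _, hsum⟩
    refine sum_zero_nil hpos ?_
    have h1 : 1 * l.sum ≤ s * l.sum := Nat.mul_le_mul_right _ hs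
    omega
  · rintro rfl; exact ⟨part_nil, nsq_nil s, by simp⟩

/-! ### concat lemmas -/

lemma sorted_concat {l : List ℕ} {x : ℕ} :
    (l ++ [x]).Pairwise (· ≤ ·) ↔ l.Pairwise (· ≤ ·) ∧ ∀ y ∈ l, y ≤ x := by
  simp [List.Pairwise, List.pairwise_append]

lemma nsq_concat {s : ℕ} {l : List ℕ} {x : ℕ} :
    NSq s (l ++ [x]) ↔ NSq s l ∧ (l.length = 0 ∨ (s - 1) * l.sum ≤ x) := by
  have hget : (l ++ [x]).getD l.length 0 = x := by
    rw [List.getD_append_right _ _ _ _ le_rfl]; simp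
  constructor
  · intro h
    refine ⟨fun j hj hjl => ?_, ?_⟩
    · have := h j hj (by simp; omega)
      rwa [List.take_append_of_le_length hjl.le,
        List.getD_append _ _ _ _ hjl] at this
    · rcases Nat.eq_zero_or_pos l.length with h0 | h0
      · exact Or.inl h0
      · refine Or.inr ?_
        have := h l.length h0 (by simp)
        rwa [List.take_append_of_le_length le_rfl, List.take_length, hget] at this
  · rintro ⟨h1, h2⟩ j hj hjl
    simp only [List.length_append, List.length_singleton] at hjl
    rcases lt_or_ge j l.length with hlt | hge
    · rw [List.take_append_of_le_length hlt.le, List.getD_append _ _ _ _ hlt]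
      exact h1 j hj hlt
    · have hje : j = l.length := by omega
      subst hje
      rw [List.take_append_of_le_length le_rfl, List.take_length, hget]
      rcases h2 with h0 | h0
      · omega
      · exact h0

/-! ### The A-side bijection -/

lemma A_eq_image {s n : ℕ} (hs : 2 ≤ s) (hn : 1 ≤ n) :
    AA s n = (fun l => l ++ [n - l.sum]) '' DD s n := by
  ext l'
  constructor
  · rintro ⟨⟨hsort, hpos⟩, hnsq, hsum⟩
    have hne : l' ≠ [] := by
      rintro rfl; simp at hsum; omega
    set l := l'.dropLast with hl
    set x := l'.getLast hne with hx
    have heq : l ++ [x] = l' := List.dropLast_append_getLast hne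
    rw [← heq] at hsort hpos hnsq hsum
    obtain ⟨hsort', hle'⟩ := sorted_concat.mp hsort
    obtain ⟨hnsq', hcase⟩ := nsq_concat.mp hnsq
    rw [List.sum_append, List.sum_singleton] at hsum
    have hsm : s * l.sum ≤ n := by
      rcases hcase with h0 | h0
      · have : l = [] := List.length_eq_zero_iff.mp h0
        simp [this]
      · have : (s - 1) * l.sum + 1 * l.sum = s * l.sum := by
          rw [← Nat.add_mul]; congr 1; omega
        omega
    refine ⟨l, ⟨⟨hsort', fun p hp => hpos p (by simp [hp])⟩, hnsq', hsm⟩, ?_⟩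
    have hnx : n - l.sum = x := by omega
    show l ++ [n - l.sum] = l'
    rw [hnx, heq]
  · rintro ⟨l, ⟨⟨hsort, hpos⟩, hnsq, hle⟩, rfl⟩
    have h2 : 2 * l.sum ≤ s * l.sum := Nat.mul_le_mul_right _ hs
    have hxpos : 0 < n - l.sum := by omega
    have hs1 : (s - 1) * l.sum + 1 * l.sum = s * l.sum := by
      rw [← Nat.add_mul]; congr 1; omega
    refine ⟨⟨sorted_concat.mpr ⟨hsort, fun y hy => ?_⟩, fun p hp => ?_⟩, ?_, ?_⟩
    · have : y ≤ l.sum := List.le_sum_of_mem hy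
      omega
    · rcases List.mem_append.mp hp with h | h
      · exact hpos p h
      · simp at h; omega
    · exact nsq_concat.mpr ⟨hnsq, Or.inr (by omega)⟩
    · rw [List.sum_append, List.sum_singleton]; omega

lemma a_eq_d {s : ℕ} (hs : 2 ≤ s) (n : ℕ) : (AA s n).ncard = (DD s n).ncard := by
  rcases Nat.eq_zero_or_pos n with rfl | hn
  · rw [A_zero, D_zero s (by omega)]
  · rw [A_eq_image hs hn]
    apply Set.ncard_image_of_injOn
    intro a _ b _ h
    have := congrArg List.dropLast h
    simpa using this

/-! ### D recurrence -/

lemma D_not_dvd {s n : ℕ} (hd : ¬ s ∣ n) (hn : 1 ≤ n) : DD s n = DD s (n - 1) := by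
  ext l
  simp only [DD, Set.mem_setOf_eq]
  constructor
  · rintro ⟨h1, h2, h3⟩
    refine ⟨h1, h2, ?_⟩
    have : s * l.sum ≠ n := fun hc => hd ⟨l.sum, hc.symm⟩
    omega
  · rintro ⟨h1, h2, h3⟩
    exact ⟨h1, h2, by omega⟩

lemma D_dvd {s n : ℕ} (hd : s ∣ n) (hn : 1 ≤ n) (hs : 1 ≤ s) :
    DD s n = DD s (n - 1) ∪ AA s (n / s) := by
  ext l
  simp only [DD, AA, Set.mem_setOf_eq, Set.mem_union]
  constructor
  · rintro ⟨h1, h2, h3⟩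
    rcases le_or_gt (s * l.sum) (n - 1) with h | h
    · exact Or.inl ⟨h1, h2, h⟩
    · have hn' : s * l.sum = n := by omega
      refine Or.inr ⟨h1, h2, ?_⟩
      rw [← hn', Nat.mul_div_cancel_left _ (by omega)]
  · rintro (⟨h1, h2, h3⟩ | ⟨h1, h2, h3⟩)
    · exact ⟨h1, h2, by omega⟩
    · refine ⟨h1, h2, ?_⟩
      rw [h3, Nat.mul_div_cancel' hd]

lemma D_disj {s n : ℕ} (hd : s ∣ n) (hn : 1 ≤ n) :
    Disjoint (DD s (n - 1)) (AA s (n / s)) := by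
  rw [Set.disjoint_left]
  rintro l ⟨_, _, h3⟩ ⟨_, _, h3'⟩
  rw [h3'] at h3
  rw [Nat.mul_div_cancel' hd] at h3
  omega

/-! ### B recurrence -/

lemma sum_map_mul (l : List ℕ) (s : ℕ) : (l.map (· * s)).sum = l.sum * s := by
  induction l with
  | nil => simp
  | cons a t ih => simp [ih, Nat.add_mul]

lemma B_split (s n : ℕ) :
    BB s n = {l ∈ BB s n | (1:ℕ) ∈ l} ∪ {l ∈ BB s n | (1:ℕ) ∉ l} := by
  ext l; by_cases h : (1:ℕ) ∈ l <;> simp [h]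

lemma B_no_one_dvd {s n : ℕ} (hs : 2 ≤ s) {l : List ℕ} (hl : l ∈ BB s n)
    (h1 : (1:ℕ) ∉ l) : s ∣ n := by
  obtain ⟨_, hpow, hsum⟩ := hl
  rw [← hsum]
  refine List.dvd_sum fun p hp => ?_
  obtain ⟨i, rfl⟩ := hpow p hp
  have hi : i ≠ 0 := by rintro rfl; simp at hp; exact h1 hp
  exact dvd_pow_self s hi

lemma B_one {s n : ℕ} (hs : 2 ≤ s) (hn : 1 ≤ n) :
    {l ∈ BB s n | (1:ℕ) ∈ l} = (fun t => 1 :: t) '' BB s (n - 1) := by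
  ext l
  constructor
  · rintro ⟨⟨⟨hsort, hpos⟩, hpow, hsum⟩, h1⟩
    cases l with
    | nil => simp at h1
    | cons a t =>
      obtain ⟨hab, hsortt⟩ := List.pairwise_cons.mp hsort
      have ha : a = 1 := by
        rcases List.mem_cons.mp h1 with h | h
        · omega
        · have := hab 1 h
          have := hpos a (by simp)
          omega
      subst ha
      refine ⟨t, ⟨⟨hsortt, fun p hp => hpos p (by simp [hp])⟩,
        fun p hp => hpow p (by simp [hp]), ?_⟩, rfl⟩
      simp at hsum; omega
  · rintro ⟨t, ⟨⟨hsort, hpos⟩, hpow, hsum⟩, rfl⟩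
    refine ⟨⟨⟨List.pairwise_cons.mpr ⟨fun b hb => hpos b hb, hsort⟩, ?_⟩, ?_, ?_⟩, by simp⟩
    · intro p hp
      rcases List.mem_cons.mp hp with h | h
      · omega
      · exact hpos p h
    · intro p hp
      rcases List.mem_cons.mp hp with h | h
      · exact ⟨0, by simp [h]⟩
      · exact hpow p h
    · simp; omega

lemma B_no_one {s n : ℕ} (hs : 2 ≤ s) (hd : s ∣ n) :
    {l ∈ BB s n | (1:ℕ) ∉ l} = (List.map (· * s)) '' BB s (n / s) := by
  have hs0 : 0 < s := by omega
  ext l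
  constructor
  · rintro ⟨⟨⟨hsort, hpos⟩, hpow, hsum⟩, h1⟩
    have hdvd : ∀ p ∈ l, s ∣ p := by
      intro p hp
      obtain ⟨i, rfl⟩ := hpow p hp
      have hi : i ≠ 0 := by rintro rfl; simp at hp; exact h1 hp
      exact dvd_pow_self s hi
    have heq : l = (l.map (· / s)).map (· * s) := by
      rw [List.map_map]
      refine ((List.map_congr_left fun p hp => ?_).trans (List.map_id l)).symm
      simp only [Function.comp]
      exact Nat.div_mul_cancel (hdvd p hp)
    refine ⟨l.map (· / s), ⟨⟨?_, ?_⟩, ?_, ?_⟩, heq.symm⟩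
    · exact List.Pairwise.map _ (fun a b h => Nat.div_le_div_right h) hsort
    · intro q hq
      obtain ⟨p, hp, rfl⟩ := List.mem_map.mp hq
      exact Nat.div_pos (Nat.le_of_dvd (hpos p hp) (hdvd p hp)) hs0
    · intro q hq
      obtain ⟨p, hp, rfl⟩ := List.mem_map.mp hq
      obtain ⟨i, rfl⟩ := hpow p hp
      have hi : i ≠ 0 := by rintro rfl; simp at hp; exact h1 hp
      refine ⟨i - 1, ?_⟩
      have : s ^ i = s ^ (i - 1) * s := by
        rw [← pow_succ]; congr 1; omega
      rw [this, Nat.mul_div_cancel _ hs0]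
    · have h2 : l.sum = (l.map (· / s)).sum * s := by
        conv_lhs => rw [heq]
        exact sum_map_mul _ _
      rw [← hsum, h2, Nat.mul_div_cancel _ hs0]
  · rintro ⟨t, ⟨⟨hsort, hpos⟩, hpow, hsum⟩, rfl⟩
    refine ⟨⟨⟨?_, ?_⟩, ?_, ?_⟩, ?_⟩
    · exact List.Pairwise.map _ (fun a b h => Nat.mul_le_mul_right s h) hsort
    · intro q hq
      obtain ⟨p, hp, rfl⟩ := List.mem_map.mp hq
      exact Nat.mul_pos (hpos p hp) hs0
    · intro q hq
      obtain ⟨p, hp, rfl⟩ := List.mem_map.mp hq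
      obtain ⟨i, rfl⟩ := hpow p hp
      exact ⟨i + 1, (pow_succ s i).symm⟩
    · rw [sum_map_mul, hsum, Nat.div_mul_cancel hd]
    · intro hc
      obtain ⟨p, hp, hpe⟩ := List.mem_map.mp hc
      have := hpos p hp
      nlinarith

lemma b_not_dvd {s n : ℕ} (hs : 2 ≤ s) (hn : 1 ≤ n) (hd : ¬ s ∣ n) :
    (BB s n).ncard = (BB s (n - 1)).ncard := by
  have hempty : {l ∈ BB s n | (1:ℕ) ∉ l} = ∅ := by
    ext l
    simp only [Set.mem_setOf_eq, Set.mem_empty_iff_false, iff_false, not_and, not_not]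
    intro hl
    by_contra h1
    exact hd (B_no_one_dvd hs hl h1)
  have : BB s n = (fun t => 1 :: t) '' BB s (n - 1) := by
    rw [B_split s n, hempty, Set.union_empty, B_one hs hn]
  rw [this]
  exact Set.ncard_image_of_injective _ (fun a b h => by injection h)

lemma b_dvd {s n : ℕ} (hs : 2 ≤ s) (hn : 1 ≤ n) (hd : s ∣ n) :
    (BB s n).ncard = (BB s (n - 1)).ncard + (BB s (n / s)).ncard := by
  have hdisj : Disjoint ((fun t => 1 :: t) '' BB s (n - 1))
      ((List.map (· * s)) '' BB s (n / s)) := by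
    rw [Set.disjoint_left]
    rintro l ⟨t, _, rfl⟩ ⟨t', ht', hmap⟩
    have h1 : (1:ℕ) ∈ (t'.map (· * s)) := by rw [hmap]; simp
    obtain ⟨p, hp, hpe⟩ := List.mem_map.mp h1
    have hppos := ht'.1.2 p hp
    nlinarith
  rw [B_split s n, B_one hs hn, B_no_one hs hd,
    Set.ncard_union_eq hdisj ((finB s (n - 1)).image _) ((finB s (n / s)).image _),
    Set.ncard_image_of_injective _ (fun a b h => by injection h : Function.Injective (fun t : List ℕ => 1 :: t)),
    Set.ncard_image_of_injective _ (List.map_injective_iff.mpr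
      (fun a b h => Nat.eq_of_mul_eq_mul_right (by omega) h))]

/-! ### Main induction -/

lemma d_eq_b {s : ℕ} (hs : 2 ≤ s) : ∀ n, (DD s n).ncard = (BB s n).ncard := by
  intro n
  induction n using Nat.strong_induction_on with
  | _ n ih =>
    rcases Nat.eq_zero_or_pos n with rfl | hn
    · rw [D_zero s (by omega), B_zero]
    · by_cases hd : s ∣ n
      · rw [D_dvd hd hn (by omega),
          Set.ncard_union_eq (D_disj hd hn) (finD s (n-1) (by omega)) (finA s (n / s)),
          a_eq_d hs, ih (n-1) (by omega), ih (n / s) (Nat.div_lt_self hn (by omega)),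
          b_dvd hs hn hd]
      · rw [D_not_dvd hd hn, ih (n - 1) (by omega), b_not_dvd hs hn hd]

end NSqAux

theorem stmt_0 (s n : ℕ) (hs : 2 ≤ s) :
    {l : List ℕ | IsPartList l ∧ NSq s l ∧ l.sum = n}.ncard =
    {l : List ℕ | IsPartList l ∧ (∀ p ∈ l, ∃ i, p = s ^ i) ∧ l.sum = n}.ncard :=
  (NSqAux.a_eq_d hs n).trans (NSqAux.d_eq_b hs n)
end

section
/- For every integer s ≥ 2, the number a_s(n) of s-non-squashing partitions of n satisfies a_s(n) = a_s(n-1) if n is not divisible by s, and a_s(n) = a_s(n-1) + a_s(n/s) if n is divisible by s, for all n ≥ s; moreover a_s(0) = a_s(1) = ... = a_s(s-1) = 1. -/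
/-- Number of s-non-squashing partitions of n. -/
noncomputable def aNSq (s n : ℕ) : ℕ :=
  {l : List ℕ | IsPartList l ∧ NSq s l ∧ l.sum = n}.ncard

namespace NSqAux

/-- The set of s-non-squashing partitions of n. -/
def S (s n : ℕ) : Set (List ℕ) := {l : List ℕ | IsPartList l ∧ NSq s l ∧ l.sum = n}

lemma aNSq_eq (s n : ℕ) : aNSq s n = (S s n).ncard := rfl

lemma S_finite (s n : ℕ) : (S s n).Finite := by
  have hinj : Set.InjOn (fun l : List ℕ => (l : Multiset ℕ)) (S s n) := by
    intro a ha b hb h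
    exact List.Perm.eq_of_pairwise' ha.1.1 hb.1.1 (Multiset.coe_eq_coe.mp h)
  apply Set.Finite.of_finite_image _ hinj
  apply Set.Finite.subset (Set.finite_range (fun P : Nat.Partition n => P.parts))
  rintro _ ⟨l, hl, rfl⟩
  exact ⟨⟨(l : Multiset ℕ), fun {p} hp => hl.1.2 p (by simpa using hp), by simp [hl.2.2]⟩, rfl⟩

lemma sum_pos_of_ne_nil {t : List ℕ} (ht : ∀ p ∈ t, 0 < p) (h : t ≠ []) : 0 < t.sum := by
  cases t with
  | nil => simp at h
  | cons a l =>
    have := ht a (by simp)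
    simp only [List.sum_cons]; omega

/-- Key characterization of membership for a list with its last element split off. -/
lemma mem_S_append {s : ℕ} (hs : 2 ≤ s) (t : List ℕ) (p n : ℕ) :
    (t ++ [p]) ∈ S s n ↔
      t ∈ S s t.sum ∧ (s - 1) * t.sum ≤ p ∧ 0 < p ∧ t.sum + p = n := by
  have hlen : (t ++ [p]).length = t.length + 1 := by simp
  have htake : ∀ j, j ≤ t.length → ((t ++ [p]).take j).sum = (t.take j).sum := by
    intro j hj
    simp [List.take_append, Nat.sub_eq_zero_of_le hj]
  have hgetD : ∀ j, j < t.length → (t ++ [p]).getD j 0 = t.getD j 0 := by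
    intro j hj; rw [List.getD_append _ _ _ _ hj]
  have hgetDlast : (t ++ [p]).getD t.length 0 = p := by
    simp [List.getD_append_right]
  constructor
  · rintro ⟨⟨hsort, hpos⟩, hnsq, hsum⟩
    have hsort' : t.Pairwise (· ≤ ·) := (List.pairwise_append.mp hsort).1
    have hpos' : ∀ q ∈ t, 0 < q := fun q hq => hpos q (by simp [hq])
    have hnsq' : NSq s t := by
      intro j hj hj'
      have := hnsq j hj (by omega)
      rwa [htake j (le_of_lt hj'), hgetD j hj'] at this
    have hlast : (s - 1) * t.sum ≤ p := by
      rcases Nat.eq_zero_or_pos t.length with h0 | h0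
      · have : t = [] := List.length_eq_zero_iff.mp h0
        simp [this]
      · have := hnsq t.length h0 (by omega)
        rwa [htake t.length le_rfl, List.take_length, hgetDlast] at this
    have hp : 0 < p := hpos p (by simp)
    have hsum' : t.sum + p = n := by simpa using hsum
    exact ⟨⟨⟨hsort', hpos'⟩, hnsq', rfl⟩, hlast, hp, hsum'⟩
  · rintro ⟨⟨⟨hsort, hpos⟩, hnsq, -⟩, hlast, hp, hsum⟩
    have hle : ∀ a ∈ t, a ≤ p := by
      intro a ha
      have h1 : a ≤ t.sum := List.single_le_sum (by simp) a ha
      have h2 : t.sum ≤ (s - 1) * t.sum := Nat.le_mul_of_pos_left _ (by omega)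
      omega
    refine ⟨⟨List.pairwise_append.mpr ⟨hsort, by simp, by simpa using hle⟩, ?_⟩, ?_, ?_⟩
    · intro q hq
      rcases List.mem_append.mp hq with h | h
      · exact hpos q h
      · simp at h; omega
    · intro j hj hj'
      rw [hlen] at hj'
      rcases Nat.lt_or_ge j t.length with h | h
      · rw [htake j (le_of_lt h), hgetD j h]
        exact hnsq j hj h
      · have : j = t.length := by omega
        subst this
        rwa [htake t.length le_rfl, List.take_length, hgetDlast]
    · simpa using hsum

lemma decomp {s n : ℕ} (hn : 0 < n) {l : List ℕ} (hl : l ∈ S s n) :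
    ∃ t p, l = t ++ [p] := by
  have hne : l ≠ [] := by
    rintro rfl
    have := hl.2.2
    simp at this; omega
  exact ⟨l.dropLast, l.getLast hne, (List.dropLast_append_getLast hne).symm⟩

lemma sum_split {s : ℕ} (hs : 2 ≤ s) (m : ℕ) : m + (s - 1) * m = s * m := by
  have h : s - 1 + 1 = s := by omega
  calc m + (s - 1) * m = (s - 1 + 1) * m := by ring
  _ = s * m := by rw [h]

/-- increment last part -/
def F : List ℕ → List ℕ := fun l => l.dropLast ++ [l.getLastD 0 + 1]

def G (s : ℕ) : List ℕ → List ℕ := fun l => l ++ [(s - 1) * l.sum]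

lemma F_concat (t : List ℕ) (p : ℕ) : F (t ++ [p]) = t ++ [p + 1] := by
  simp [F]

lemma concat_inj {t t' : List ℕ} {a b : ℕ} (h : t ++ [a] = t' ++ [b]) : t = t' ∧ a = b := by
  have := List.append_inj' h rfl
  simpa using this

lemma F_injOn {s n : ℕ} (hn : 0 < n) : Set.InjOn F (S s n) := by
  intro a ha b hb h
  obtain ⟨t1, p1, rfl⟩ := decomp hn ha
  obtain ⟨t2, p2, rfl⟩ := decomp hn hb
  rw [F_concat, F_concat] at h
  obtain ⟨h1, h2⟩ := concat_inj h
  subst h1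
  simp at h2
  rw [h2]

lemma G_injOn {s : ℕ} (X : Set (List ℕ)) : Set.InjOn (G s) X := by
  intro a ha b hb h
  exact (concat_inj h).1

/-- Main decomposition when s ∣ n. -/
lemma S_eq_of_dvd {s n : ℕ} (hs : 2 ≤ s) (hn : s ≤ n) (hd : s ∣ n) :
    S s n = F '' S s (n - 1) ∪ G s '' S s (n / s) := by
  have hn2 : 2 ≤ n := le_trans hs hn
  have hq : 1 ≤ n / s := (Nat.one_le_div_iff (by omega)).mpr hn
  ext l
  constructor
  · intro hl
    obtain ⟨t, p, rfl⟩ := decomp (by omega) hl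
    obtain ⟨ht, hlast, hp, hsum⟩ := (mem_S_append hs t p n).mp hl
    rcases Nat.lt_or_ge ((s - 1) * t.sum) p with hlt | hge
    · -- strictly bigger: comes from F
      left
      have hp2 : 2 ≤ p := by
        by_contra h
        have hp1 : p = 1 := by omega
        subst hp1
        have : (s - 1) * t.sum = 0 := by omega
        have hts : t.sum = 0 := by
          rcases Nat.mul_eq_zero.mp this with h | h
          · omega
          · exact h
        omega
      refine ⟨t ++ [p - 1], ?_, ?_⟩
      · exact (mem_S_append hs t (p - 1) (n - 1)).mpr ⟨ht, by omega, by omega, by omega⟩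
      · rw [F_concat]
        congr 1
        simp
        omega
    · -- equality: comes from G
      right
      have heq : (s - 1) * t.sum = p := le_antisymm hlast hge
      have hns : n = s * t.sum := by
        have := sum_split hs t.sum
        omega
      have hts : t.sum = n / s := by
        rw [hns]; rw [Nat.mul_div_cancel_left _ (by omega)]
      refine ⟨t, ?_, ?_⟩
      · rw [← hts]; exact ht
      · simp [G, heq]
  · rintro (⟨l', hl', rfl⟩ | ⟨l', hl', rfl⟩)
    · obtain ⟨t, p, rfl⟩ := decomp (by omega) hl'
      obtain ⟨ht, hlast, hp, hsum⟩ := (mem_S_append hs t p (n - 1)).mp hl'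
      rw [F_concat]
      exact (mem_S_append hs t (p + 1) n).mpr ⟨ht, by omega, by omega, by omega⟩
    · obtain ⟨ht1, ht2, ht3⟩ := hl'
      have hsum : l'.sum = n / s := ht3
      have hpos : 0 < (s - 1) * l'.sum := by
        apply Nat.mul_pos (by omega)
        rw [hsum]; omega
      have htot : l'.sum + (s - 1) * l'.sum = n := by
        rw [sum_split hs, hsum, Nat.mul_div_cancel' hd]
      exact (mem_S_append hs l' ((s - 1) * l'.sum) n).mpr
        ⟨⟨ht1, ht2, rfl⟩, le_rfl, hpos, htot⟩

/-- Main decomposition when ¬ s ∣ n. -/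
lemma S_eq_of_not_dvd {s n : ℕ} (hs : 2 ≤ s) (hn : s ≤ n) (hd : ¬ s ∣ n) :
    S s n = F '' S s (n - 1) := by
  have hn2 : 2 ≤ n := le_trans hs hn
  ext l
  constructor
  · intro hl
    obtain ⟨t, p, rfl⟩ := decomp (by omega) hl
    obtain ⟨ht, hlast, hp, hsum⟩ := (mem_S_append hs t p n).mp hl
    have hlt : (s - 1) * t.sum < p := by
      rcases Nat.lt_or_ge ((s - 1) * t.sum) p with h | h
      · exact h
      · exfalso
        have heq : (s - 1) * t.sum = p := le_antisymm hlast h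
        have hns : n = s * t.sum := by
          have := sum_split hs t.sum
          omega
        exact hd ⟨t.sum, hns⟩
    have hp2 : 2 ≤ p := by
      by_contra h
      have hp1 : p = 1 := by omega
      subst hp1
      have h0 : (s - 1) * t.sum = 0 := by omega
      have hts : t.sum = 0 := by
        rcases Nat.mul_eq_zero.mp h0 with h | h
        · omega
        · exact h
      omega
    refine ⟨t ++ [p - 1], ?_, ?_⟩
    · exact (mem_S_append hs t (p - 1) (n - 1)).mpr ⟨ht, by omega, by omega, by omega⟩
    · rw [F_concat]; congr 1; simp; omega
  · rintro ⟨l', hl', rfl⟩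
    obtain ⟨t, p, rfl⟩ := decomp (by omega) hl'
    obtain ⟨ht, hlast, hp, hsum⟩ := (mem_S_append hs t p (n - 1)).mp hl'
    rw [F_concat]
    exact (mem_S_append hs t (p + 1) n).mpr ⟨ht, by omega, by omega, by omega⟩

lemma disj {s n : ℕ} (hs : 2 ≤ s) (hn : s ≤ n) :
    Disjoint (F '' S s (n - 1)) (G s '' S s (n / s)) := by
  rw [Set.disjoint_left]
  rintro x ⟨l1, hl1, rfl⟩ ⟨l2, hl2, hx⟩
  obtain ⟨t1, p1, rfl⟩ := decomp (by omega) hl1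
  obtain ⟨ht, hlast, hp, hsum⟩ := (mem_S_append hs t1 p1 (n - 1)).mp hl1
  rw [F_concat] at hx
  obtain ⟨h1, h2⟩ := concat_inj hx.symm
  subst h1
  omega

lemma S_small {s n : ℕ} (hs : 2 ≤ s) (hn : n < s) :
    S s n = {if n = 0 then [] else [n]} := by
  ext l
  constructor
  · intro hl
    rcases Nat.eq_zero_or_pos n with h0 | h0
    · subst h0
      have hne : l = [] := by
        by_contra h
        have h1 := sum_pos_of_ne_nil hl.1.2 h
        have h2 : l.sum = 0 := hl.2.2
        omega
      simp [hne]
    · obtain ⟨t, p, rfl⟩ := decomp h0 hl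
      obtain ⟨ht, hlast, hp, hsum⟩ := (mem_S_append hs t p n).mp hl
      have hte : t = [] := by
        by_contra h
        have hts : 0 < t.sum := sum_pos_of_ne_nil ht.1.2 h
        have : s - 1 ≤ (s - 1) * t.sum := Nat.le_mul_of_pos_right _ hts
        omega
      subst hte
      have hpn : p = n := by simpa using hsum
      subst hpn
      simp [if_neg (by omega : ¬ p = 0)]
  · intro hl
    simp only [Set.mem_singleton_iff] at hl
    subst hl
    rcases Nat.eq_zero_or_pos n with h0 | h0
    · subst h0
      rw [if_pos rfl]
      refine ⟨⟨by simp, by simp⟩, ?_, by simp⟩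
      intro j hj hj'; simp at hj'
    · rw [if_neg (by omega)]
      refine ⟨⟨by simp, by simpa using h0⟩, ?_, by simp⟩
      intro j hj hj'; simp at hj'; omega

end NSqAux

open NSqAux in
theorem stmt_2 (s : ℕ) (hs : 2 ≤ s) :
    (∀ n, s ≤ n → ¬ s ∣ n → aNSq s n = aNSq s (n - 1)) ∧
    (∀ n, s ≤ n → s ∣ n → aNSq s n = aNSq s (n - 1) + aNSq s (n / s)) ∧
    (∀ n, n < s → aNSq s n = 1) := by
  refine ⟨?_, ?_, ?_⟩
  · intro n hn hd
    rw [aNSq_eq, aNSq_eq, S_eq_of_not_dvd hs hn hd,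
      Set.ncard_image_of_injOn (F_injOn (by omega))]
  · intro n hn hd
    rw [aNSq_eq, aNSq_eq, aNSq_eq, S_eq_of_dvd hs hn hd,
      Set.ncard_union_eq (disj hs hn) ((S_finite s (n-1)).image _)
        ((S_finite s (n/s)).image _),
      Set.ncard_image_of_injOn (F_injOn (by omega)),
      Set.ncard_image_of_injOn (G_injOn _)]
  · intro n hn
    rw [aNSq_eq, S_small hs hn, Set.ncard_singleton]
end

section
/- If n = p_1 + ... + p_k is an s-non-squashing partition of n ≥ s with largest part p_k strictly greater than (s-1)n/s, then subtracting 1 from the largest part yields an s-non-squashing partition of n-1. -/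
theorem stmt_3 (s n : ℕ) (hs : 2 ≤ s) (hn : s ≤ n) (l : List ℕ)
    (hl : IsPartList l) (hns : NSq s l) (hsum : l.sum = n) (hne : l ≠ [])
    (hbig : (s - 1) * n < s * l.getLast hne) :
    IsPartList (l.dropLast ++ [l.getLast hne - 1]) ∧
    NSq s (l.dropLast ++ [l.getLast hne - 1]) ∧
    (l.dropLast ++ [l.getLast hne - 1]).sum = n - 1 := by
  obtain ⟨hsort, hpos⟩ := hl
  obtain ⟨t, rfl⟩ : ∃ t, s = t + 1 := ⟨s - 1, by omega⟩
  simp only [Nat.add_sub_cancel] at hbig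
  have hns' : ∀ j, 0 < j → j < l.length → t * (l.take j).sum ≤ l.getD j 0 := by
    simpa [NSq] using hns
  set L := l.dropLast with hL
  set M := l.getLast hne with hM
  have hdecomp : l = L ++ [M] := (List.dropLast_append_getLast hne).symm
  have hsumL : L.sum + M = n := by
    rw [hdecomp] at hsum; simpa using hsum
  have hMpos : 0 < M := hpos M (by rw [hdecomp]; simp)
  have hkey : t * L.sum < M := by
    have h2 : t * L.sum + t * M < M + t * M := by
      calc t * L.sum + t * M = t * (L.sum + M) := by ring
        _ < (t + 1) * M := by rw [hsumL]; exact hbig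
        _ = M + t * M := by ring
    exact Nat.lt_of_add_lt_add_right h2
  have hM2 : 2 ≤ M := by
    by_contra h
    have hM1 : M = 1 := by omega
    rw [hM1, Nat.lt_one_iff, Nat.mul_eq_zero] at hkey
    have : L.sum = 0 := by omega
    omega
  -- elements of L are ≤ M
  rw [hdecomp] at hsort
  rw [List.pairwise_append] at hsort
  obtain ⟨hsortL, -, hLM⟩ := hsort
  have hle : ∀ p ∈ L, p ≤ M - 1 := by
    intro p hp
    have h1 : p ≤ M := hLM p hp M (by simp)
    rcases lt_or_eq_of_le h1 with h | h
    · omega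
    · exfalso
      have hps : p ≤ L.sum := List.single_le_sum (fun _ _ => Nat.zero_le _) p hp
      have : M ≤ t * L.sum := by
        calc M = p := h.symm
          _ ≤ L.sum := hps
          _ ≤ t * L.sum := Nat.le_mul_of_pos_left _ (by omega)
      omega
  refine ⟨⟨?_, ?_⟩, ?_, ?_⟩
  · rw [List.pairwise_append]
    exact ⟨hsortL, List.pairwise_singleton _ _, fun a ha b hb => by
      simp at hb; subst hb; exact hle a ha⟩
  · intro p hp
    rw [List.mem_append] at hp
    rcases hp with hp | hp
    · exact hpos p (by rw [hdecomp]; exact List.mem_append_left _ hp)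
    · simp at hp; omega
  · intro j hj hjlen
    simp only [Nat.add_sub_cancel]
    rw [List.length_append, List.length_singleton] at hjlen
    rcases Nat.lt_or_ge j L.length with hjL | hjL
    · have htake : ((L ++ [M - 1]).take j).sum = (l.take j).sum := by
        rw [hdecomp, List.take_append_of_le_length (le_of_lt hjL),
          List.take_append_of_le_length (le_of_lt hjL)]
      have hget : (L ++ [M - 1]).getD j 0 = l.getD j 0 := by
        rw [hdecomp, List.getD_append _ _ _ _ hjL, List.getD_append _ _ _ _ hjL]
      rw [htake, hget]
      exact hns' j hj (by rw [hdecomp]; simp; omega)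
    · have hjeq : j = L.length := by omega
      subst hjeq
      rw [List.take_append_of_le_length (le_refl _), List.take_length]
      have hget : (L ++ [M - 1]).getD L.length 0 = M - 1 := by
        rw [List.getD_append_right _ _ _ _ (le_refl _)]
        simp
      rw [hget]
      omega
  · rw [List.sum_append, List.sum_singleton]
    omega
end

section
/- The generating function B(x) = Σ_{n≥0} b(n) x^n of non-squashing partitions into distinct parts satisfies the functional equation B(x) = B(x^2)/(1-x) - x^2/(1-x^2) as formal power series. -/
/-- Number of non-squashing partitions of n into distinct parts. -/
noncomputable def b (n : ℕ) : ℕ :=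
  {l : List ℕ | DistinctPartList l ∧ NSq 2 l ∧ l.sum = n}.ncard

namespace NSqAux

def A (n : ℕ) : Set (List ℕ) := {l | DistinctPartList l ∧ NSq 2 l ∧ l.sum = n}
def Ale (k : ℕ) : Set (List ℕ) := {l | DistinctPartList l ∧ NSq 2 l ∧ l.sum ≤ k}

lemma bA (n : ℕ) : b n = (A n).ncard := rfl

lemma Ale_finite (k : ℕ) : (Ale k).Finite := by
  have hinj : (Ale k).InjOn List.toFinset := by
    intro l1 h1 l2 h2 he
    exact List.Perm.eq_of_pairwise (fun a b _ _ h1 h2 => absurd (h1.trans h2) (lt_irrefl _)) h1.1.1 h2.1.1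
      (List.perm_of_nodup_nodup_toFinset_eq h1.1.1.nodup h2.1.1.nodup he)
  apply Set.Finite.of_finite_image _ hinj
  apply Set.Finite.subset (Finset.finite_toSet ((Finset.range (k+1)).powerset))
  rintro s ⟨l, hl, rfl⟩
  simp only [Finset.coe_powerset, Set.mem_preimage, Set.mem_powerset_iff, Finset.coe_range]
  intro x hx
  simp only [List.coe_toFinset, Set.mem_setOf_eq] at hx
  have : x ≤ l.sum := List.single_le_sum (fun y _ => Nat.zero_le y) x hx
  have := hl.2.2
  simp only [Set.mem_Iio]
  omega

lemma A_finite (n : ℕ) : (A n).Finite :=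
  (Ale_finite n).subset (fun l hl => ⟨hl.1, hl.2.1, le_of_eq hl.2.2⟩)

lemma Ale_zero : Ale 0 = {([] : List ℕ)} := by
  ext l
  constructor
  · rintro ⟨hd, _, hs⟩
    have : ∀ p ∈ l, p = 0 := fun p hp => by
      have := List.single_le_sum (fun y (_ : y ∈ l) => Nat.zero_le y) p hp
      omega
    cases l with
    | nil => rfl
    | cons a t => exact absurd (hd.2 a (by simp)) (by simp [this a (by simp)])
  · rintro rfl
    refine ⟨⟨List.Pairwise.nil, by simp⟩, fun j hj hj' => by simp at hj', by simp⟩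

lemma A_zero_s6 : A 0 = {([] : List ℕ)} := by
  have h1 : A 0 ⊆ Ale 0 := fun l hl => ⟨hl.1, hl.2.1, le_of_eq hl.2.2⟩
  have h2 : Ale 0 ⊆ A 0 := fun l hl => ⟨hl.1, hl.2.1, Nat.le_zero.mp hl.2.2⟩
  rw [← Ale_zero]
  exact le_antisymm h1 h2

def Bad (n : ℕ) : Set (List ℕ) := if Even n ∧ 2 ≤ n then {[n/2]} else ∅

lemma Bad_subset (n : ℕ) : Bad n ⊆ Ale (n/2) := by
  unfold Bad
  split
  · rename_i h
    rintro l rfl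
    refine ⟨⟨by simp, by simp; omega⟩, fun j hj hj' => by simp at hj'; omega, by simp⟩
  · exact Set.empty_subset _

lemma Bad_ncard (n : ℕ) : (Bad n).ncard = if Even n ∧ 2 ≤ n then 1 else 0 := by
  unfold Bad
  split <;> simp

/-- element of a list equal to the whole sum, all parts positive → singleton -/
lemma eq_singleton_of_mem_sum {l : List ℕ} (hpos : ∀ p ∈ l, 0 < p) {p : ℕ}
    (hp : p ∈ l) (hsum : l.sum = p) : l = [p] := by
  have hperm := List.perm_cons_erase hp
  have hs : l.sum = p + (l.erase p).sum := by
    rw [hperm.sum_eq]; simp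
  have hz : (l.erase p).sum = 0 := by omega
  have : l.erase p = [] := by
    cases he : l.erase p with
    | nil => rfl
    | cons a t =>
      have ha : a ∈ l.erase p := by simp [he]
      have := hpos a (List.erase_subset ha)
      rw [he] at hz
      simp at hz
      omega
  rw [this] at hperm
  exact hperm.eq_singleton ▸ rfl

lemma key (n : ℕ) (hn : 1 ≤ n) :
    (Ale (n/2)).ncard = (A n).ncard + (if Even n ∧ 2 ≤ n then 1 else 0) := by
  have himg : A n = (fun l => l ++ [n - l.sum]) '' ((Ale (n/2)) \ Bad n) := by
    ext l
    constructor
    · rintro ⟨⟨hsort, hpos⟩, hnsq, hsum⟩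
      have hne : l ≠ [] := by rintro rfl; simp at hsum; omega
      have hlen : 0 < l.length := List.length_pos_iff.mpr hne
      have hdec : l.dropLast ++ [l.getLast hne] = l := List.dropLast_append_getLast hne
      have hsum' : l.dropLast.sum + l.getLast hne = n := by
        conv_rhs => rw [← hsum, ← hdec]
        simp
      have hsle : l.dropLast.sum ≤ l.getLast hne := by
        rcases Nat.lt_or_ge 1 l.length with h1 | h1
        · have := hnsq (l.length - 1) (by omega) (by omega)
          rw [List.getD_eq_getElem _ _ (by omega), ← List.getLast_eq_getElem] at this
          rw [← List.dropLast_eq_take] at this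
          simpa using this
        · have : l.dropLast = [] := by
            cases l with
            | nil => simp
            | cons a t => simp at h1 ⊢; exact List.length_eq_zero_iff.mp (by simpa using h1)
          simp [this]
      have hsub : l.dropLast.Sublist l := List.dropLast_sublist l
      have hmem : l.dropLast ∈ Ale (n/2) := by
        refine ⟨⟨hsort.sublist hsub, fun p hp => hpos p (hsub.subset hp)⟩, ?_, by omega⟩
        intro j hj hjlen
        have hjl : j < l.length - 1 := by simpa [List.length_dropLast] using hjlen
        have h2 := hnsq j hj (by omega)
        rw [List.getD_eq_getElem _ _ (by omega)] at h2
        rw [List.getD_eq_getElem _ _ hjlen]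
        have ht : l.dropLast.take j = l.take j := by
          rw [List.dropLast_eq_take, List.take_take, min_eq_left (by omega)]
        rw [ht, List.getElem_dropLast]
        exact h2
      have hbad : l.dropLast ∉ Bad n := by
        intro hb
        unfold Bad at hb
        split at hb
        · rename_i hcond
          rw [Set.mem_singleton_iff] at hb
          have hev := Nat.even_iff.mp hcond.1
          have hs2 : n/2 + l.getLast hne = n := by rw [hb] at hsum'; simpa using hsum'
          have hlt : n/2 < l.getLast hne := by
            rw [← hdec, hb] at hsort
            have := (List.pairwise_append.mp hsort).2.2
            exact this (n/2) (by simp) (l.getLast hne) (by simp)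
          omega
        · exact hb
      refine ⟨l.dropLast, ⟨hmem, hbad⟩, ?_⟩
      have : n - l.dropLast.sum = l.getLast hne := by omega
      simp only [this]
      exact hdec
    · rintro ⟨l', ⟨⟨⟨hsort, hpos⟩, hnsq, hle⟩, hbad⟩, rfl⟩
      have h2m : 2 * l'.sum ≤ n := by omega
      have hxpos : 0 < n - l'.sum := by omega
      have hplt : ∀ p ∈ l', p < n - l'.sum := by
        intro p hp
        have h1 : p ≤ l'.sum := List.single_le_sum (fun y _ => Nat.zero_le y) p hp
        rcases Nat.lt_or_ge p (n - l'.sum) with h | h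
        · exact h
        · exfalso
          have hpm : p = l'.sum := by omega
          have hsing : l' = [p] := eq_singleton_of_mem_sum hpos hp hpm.symm
          have hppos := hpos p hp
          apply hbad
          unfold Bad
          rw [if_pos ⟨⟨p, by omega⟩, by omega⟩]
          rw [Set.mem_singleton_iff, hsing]
          have : n / 2 = p := by omega
          rw [this]
      refine ⟨⟨?_, ?_⟩, ?_, ?_⟩
      · refine List.pairwise_append.mpr ⟨hsort, by simp, ?_⟩
        intro a ha c hc
        simp only [List.mem_singleton] at hc
        subst hc
        exact hplt a ha
      · intro p hp
        rcases List.mem_append.mp hp with h | h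
        · exact hpos p h
        · simp only [List.mem_singleton] at h; omega
      · intro j hj hjlen
        simp only [List.length_append, List.length_singleton] at hjlen
        rcases Nat.lt_or_ge j l'.length with h | h
        · have ht : (l' ++ [n - l'.sum]).take j = l'.take j :=
            List.take_append_of_le_length (le_of_lt h)
          have hg : (l' ++ [n - l'.sum]).getD j 0 = l'.getD j 0 := by
            rw [List.getD_eq_getElem _ _ (by simp; omega), List.getElem_append_left h,
              List.getD_eq_getElem _ _ h]
          rw [ht, hg]
          exact hnsq j hj h
        · have hjeq : j = l'.length := by omega
          subst hjeq
          have ht : (l' ++ [n - l'.sum]).take l'.length = l' := by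
            rw [List.take_append_of_le_length le_rfl, List.take_length]
          have hg : (l' ++ [n - l'.sum]).getD l'.length 0 = n - l'.sum := by
            rw [List.getD_eq_getElem _ _ (by simp)]
            simp
          rw [ht, hg]
          omega
      · simp only [List.sum_append, List.sum_singleton]
        omega
  have hinj : ((Ale (n/2)) \ Bad n).InjOn (fun l => l ++ [n - l.sum]) := by
    intro l1 _ l2 _ he
    have := congrArg List.dropLast he
    simpa using this
  rw [himg, Set.ncard_image_of_injOn hinj, ← Bad_ncard n]
  exact (Set.ncard_diff_add_ncard_of_subset (Bad_subset n) (Ale_finite _)).symm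



lemma Ale_succ (k : ℕ) : (Ale (k+1)).ncard = (Ale k).ncard + b (k+1) := by
  have hsplit : Ale (k+1) = Ale k ∪ A (k+1) := by
    ext l
    constructor
    · rintro ⟨h1, h2, h3⟩
      rcases Nat.lt_or_ge l.sum (k+1) with h | h
      · exact Or.inl ⟨h1, h2, by omega⟩
      · exact Or.inr ⟨h1, h2, by omega⟩
    · rintro (⟨h1, h2, h3⟩ | ⟨h1, h2, h3⟩)
      · exact ⟨h1, h2, by omega⟩
      · exact ⟨h1, h2, by omega⟩
  have hdisj : Disjoint (Ale k) (A (k+1)) := by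
    rw [Set.disjoint_left]
    rintro l ⟨_, _, h1⟩ ⟨_, _, h2⟩
    omega
  rw [hsplit, Set.ncard_union_eq hdisj (Ale_finite k) (A_finite (k+1)), bA]

lemma b_zero : b 0 = 1 := by rw [bA, A_zero_s6]; simp

lemma Ale_zero_ncard : (Ale 0).ncard = 1 := by rw [Ale_zero]; simp

lemma b_one : b 1 = 1 := by
  have := key 1 (by norm_num)
  rw [show (1:ℕ)/2 = 0 from rfl, Ale_zero_ncard, if_neg (by omega)] at this
  rw [bA]; omega

lemma b_two : b 2 = 1 := by
  have h1 := key 2 (by norm_num)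
  rw [show (2:ℕ)/2 = 1 from rfl, Ale_succ 0, Ale_zero_ncard, b_one,
    if_pos ⟨even_two, le_refl 2⟩] at h1
  rw [bA]; omega

lemma b_three : b 3 = 2 := by
  have h1 := key 3 (by norm_num)
  rw [show (3:ℕ)/2 = 1 from rfl, Ale_succ 0, Ale_zero_ncard, b_one,
    if_neg (by rintro ⟨⟨r, hr⟩, _⟩; omega)] at h1
  rw [bA]; omega

lemma b_rec (n : ℕ) (hn : 3 ≤ n) : b n = b (n - 2) + b (n / 2) := by
  rcases Nat.lt_or_ge n 4 with h4 | h4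
  · have : n = 3 := by omega
    subst this
    rw [b_three, show (3:ℕ)-2 = 1 from rfl, show (3:ℕ)/2 = 1 from rfl, b_one]
  · have h1 := key n (by omega)
    have h2 := key (n-2) (by omega)
    have h3 : (n-2)/2 = n/2 - 1 := by omega
    have h4' : n/2 = (n/2 - 1) + 1 := by omega
    rw [h3] at h2
    have h5 := Ale_succ (n/2 - 1)
    rw [← h4'] at h5
    have heq : (if Even n ∧ 2 ≤ n then 1 else 0) = (if Even (n-2) ∧ 2 ≤ n-2 then 1 else 0) := by
      have : Even n ↔ Even (n-2) := by
        rw [Nat.even_iff, Nat.even_iff]; omega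
      by_cases he : Even n
      · rw [if_pos ⟨he, by omega⟩, if_pos ⟨this.mp he, by omega⟩]
      · rw [if_neg (fun hc => he hc.1), if_neg (fun hc => he (this.mpr hc.1))]
    rw [bA n, bA (n-2), ← h4'] at *
    omega

end NSqAux

open PowerSeries in
theorem stmt_6 :
    (PowerSeries.mk fun n => (b n : ℚ)) =
      (1 - X)⁻¹ * (PowerSeries.mk fun n => if Even n then (b (n / 2) : ℚ) else 0)
        - X ^ 2 * (1 - X ^ 2)⁻¹ := by
  classical
  set B : PowerSeries ℚ := PowerSeries.mk fun n => (b n : ℚ) with hBdef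
  set B2 : PowerSeries ℚ := PowerSeries.mk fun n => if Even n then (b (n / 2) : ℚ) else 0
    with hB2def
  have hA : ((1 - X : ℚ⟦X⟧)) * (1 - X)⁻¹ = 1 := by
    apply PowerSeries.mul_inv_cancel
    simp
  have hBu : ((1 - X^2 : ℚ⟦X⟧)) * (1 - X^2)⁻¹ = 1 := by
    apply PowerSeries.mul_inv_cancel
    simp [pow_two]
  have h : B + B * X^3 + X^2 + B2 * X^2 = B2 + B * X^1 + B * X^2 + X^3 := by
    ext n
    simp only [map_add, PowerSeries.coeff_mul_X_pow', PowerSeries.coeff_X_pow,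
      hBdef, hB2def, PowerSeries.coeff_mk]
    rcases Nat.lt_or_ge n 4 with h4 | h4
    · interval_cases n <;>
        norm_num [NSqAux.b_zero, NSqAux.b_one, NSqAux.b_two, NSqAux.b_three, Nat.even_iff]
    · rw [if_neg (by omega : ¬ n = 2), if_neg (by omega : ¬ n = 3),
        if_pos (by omega : 3 ≤ n), if_pos (by omega : 2 ≤ n), if_pos (by omega : 1 ≤ n),
        if_pos (by omega : 2 ≤ n)]
      have hr1 : (b n : ℚ) = (b (n-2) : ℚ) + (b (n/2) : ℚ) := by
        rw [NSqAux.b_rec n (by omega)]; push_cast; ring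
      have hr2 : (b (n-1) : ℚ) = (b (n-3) : ℚ) + (b ((n-1)/2) : ℚ) := by
        rw [NSqAux.b_rec (n-1) (by omega)]
        rw [show n-1-2 = n-3 from by omega]
        push_cast; ring
      by_cases he : Even n
      · have he2 : Even (n-2) := by rw [Nat.even_iff] at he ⊢; omega
        rw [if_pos he, if_pos he2]
        rw [show (n-1)/2 = (n-2)/2 from by rw [Nat.even_iff] at he; omega] at hr2
        linarith
      · have ho2 : ¬ Even (n-2) := by rw [Nat.even_iff] at he ⊢; omega
        rw [if_neg he, if_neg ho2]
        rw [show (n-1)/2 = n/2 from by rw [Nat.even_iff] at he; omega] at hr2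
        linarith
  calc B = ((1-X)*(1-X)⁻¹) * ((1-X^2)*(1-X^2)⁻¹) * B := by rw [hA, hBu]; ring
    _ = (1-X)⁻¹ * (1-X^2)⁻¹ * ((1-X)*(1-X^2)*B) := by ring
    _ = (1-X)⁻¹ * (1-X^2)⁻¹ * ((1-X^2)*B2 - (1-X)*X^2) := by
        congr 1
        linear_combination h
    _ = (1-X)⁻¹ * ((1-X^2)*(1-X^2)⁻¹) * B2 - ((1-X)*(1-X)⁻¹) * (X^2*(1-X^2)⁻¹) := by ring
    _ = (1-X)⁻¹ * B2 - X^2 * (1-X^2)⁻¹ := by rw [hA, hBu]; ring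
end

section
/- The number b(n) of non-squashing partitions of n into distinct parts equals the number of partitions of n into powers of 2 such that either all parts equal 1, or, if the largest part is 2^i with i ≥ 1, there is at least one part equal to 2^{i-1}. -/
/-- Domain predicate on reversed (strictly decreasing) lists. -/
def Dom : List ℕ → Prop
  | [] => True
  | p :: rest => rest.sum ≤ p ∧ (∀ q ∈ rest, q < p) ∧ 0 < p ∧ Dom rest

/-- The bijection, on reversed lists. -/
def Psi : List ℕ → List ℕ
  | [] => []
  | p :: rest => List.replicate (p - rest.sum) 1 ++ (Psi rest).map (fun x => 2 * x)

lemma take_append_le {l₁ l₂ : List ℕ} {n : ℕ} (h : n ≤ l₁.length) :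
    (l₁ ++ l₂).take n = l₁.take n := by
  simp [List.take_append, Nat.sub_eq_zero_of_le h, h]

lemma Dom.pos : ∀ {l : List ℕ}, Dom l → ∀ q ∈ l, 0 < q
  | [], _, q, hq => by simp at hq
  | p :: rest, ⟨h1, h2, h3, h4⟩, q, hq => by
    rcases List.mem_cons.1 hq with rfl | hq
    · exact h3
    · exact h4.pos q hq

lemma Dom.le_sum : ∀ {l : List ℕ}, Dom l → ∀ q ∈ l, q ≤ l.sum
  | [], _, q, hq => by simp at hq
  | p :: rest, ⟨h1, h2, h3, h4⟩, q, hq => by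
    rcases List.mem_cons.1 hq with rfl | hq
    · simp
    · have := h4.le_sum q hq; simp only [List.sum_cons]; omega

lemma psi_pos : ∀ {l : List ℕ}, Dom l → ∀ q ∈ Psi l, 0 < q
  | [], _, q, hq => by simp [Psi] at hq
  | p :: rest, ⟨h1, h2, h3, h4⟩, q, hq => by
    simp only [Psi, List.mem_append, List.mem_replicate, List.mem_map] at hq
    rcases hq with ⟨-, rfl⟩ | ⟨x, hx, rfl⟩
    · norm_num
    · have := psi_pos h4 x hx; omega

lemma psi_sum : ∀ {l : List ℕ}, Dom l → (Psi l).sum = l.sum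
  | [], _ => rfl
  | p :: rest, ⟨h1, h2, h3, h4⟩ => by
    have ih := psi_sum h4
    simp only [Psi, List.sum_append, List.sum_replicate, smul_eq_mul, mul_one, List.sum_cons]
    rw [List.sum_map_mul_left, List.map_id', ih]
    omega

lemma psi_ne_nil : ∀ {l : List ℕ}, Dom l → l ≠ [] → Psi l ≠ [] := by
  intro l hd hne hcon
  have h1 : (Psi l).sum = l.sum := psi_sum hd
  rw [hcon] at h1
  rcases l with _ | ⟨p, rest⟩
  · exact hne rfl
  · obtain ⟨-, -, h3, -⟩ := hd
    simp at h1; omega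

lemma psi_inj : ∀ {l₁ l₂ : List ℕ}, Dom l₁ → Dom l₂ → Psi l₁ = Psi l₂ → l₁ = l₂
  | [], [], _, _, _ => rfl
  | [], p :: rest, h1, h2, h => absurd h.symm (psi_ne_nil h2 (by simp))
  | p :: rest, [], h1, h2, h => absurd h (psi_ne_nil h1 (by simp))
  | p₁ :: r₁, p₂ :: r₂, ⟨ha1, hb1, hc1, hd1⟩, ⟨ha2, hb2, hc2, hd2⟩, h => by
    simp only [Psi] at h
    have hcount : ∀ (a : ℕ) (r : List ℕ), Dom r →
        (List.replicate a 1 ++ (Psi r).map (fun x => 2 * x)).count 1 = a := by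
      intro a r hr
      have hz : List.count 1 ((Psi r).map (fun x => 2 * x)) = 0 := by
        refine List.count_eq_zero.2 ?_
        intro hmem
        simp only [List.mem_map] at hmem
        obtain ⟨x, hx, hx2⟩ := hmem
        have := psi_pos hr x hx; omega
      rw [List.count_append, List.count_replicate, hz]
      simp
    have hcnt : p₁ - r₁.sum = p₂ - r₂.sum := by
      have e1 := hcount (p₁ - r₁.sum) r₁ hd1
      have e2 := hcount (p₂ - r₂.sum) r₂ hd2
      rw [h] at e1; exact e1.symm.trans e2
    have hlen : (List.replicate (p₁ - r₁.sum) (1:ℕ)).length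
        = (List.replicate (p₂ - r₂.sum) (1:ℕ)).length := by simp [hcnt]
    have hmap : (Psi r₁).map (fun x => 2 * x) = (Psi r₂).map (fun x => 2 * x) :=
      List.append_inj_right h (by simpa using hcnt)
    have hpsi : Psi r₁ = Psi r₂ := by
      have : Function.Injective (fun x : ℕ => 2 * x) := fun a b hab => by
        have h2 : 2 * a = 2 * b := hab
        omega
      exact List.map_injective_iff.2 this hmap
    have hr : r₁ = r₂ := psi_inj hd1 hd2 hpsi
    subst hr
    have hs : r₁.sum ≤ p₁ := ha1
    have hs2 : r₁.sum ≤ p₂ := ha2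
    have : p₁ = p₂ := by omega
    rw [this]


def Gmem (t : List ℕ) : Prop :=
  IsPartList t ∧ (∀ p ∈ t, ∃ i, p = 2 ^ i) ∧
    ((∀ p ∈ t, p = 1) ∨
      ∃ i, 1 ≤ i ∧ (2 : ℕ) ^ i ∈ t ∧ (∀ p ∈ t, p ≤ 2 ^ i) ∧ (2 : ℕ) ^ (i - 1) ∈ t)

lemma psi_all_ones {l : List ℕ} (hd : Dom l) (hne : l ≠ [])
    (h1 : ∀ q ∈ Psi l, q = 1) : l = [l.sum] := by
  have hsum : (Psi l).sum = l.sum := psi_sum hd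
  have hrep : Psi l = List.replicate (Psi l).length 1 := List.eq_replicate_iff.2 ⟨rfl, h1⟩
  have hlen : (Psi l).length = l.sum := by
    rw [hrep] at hsum; simpa using hsum
  have hpos : 0 < l.sum := by
    rcases l with _ | ⟨p, rest⟩
    · exact absurd rfl hne
    · obtain ⟨-, -, h3, -⟩ := hd
      simp only [List.sum_cons]; omega
  have hdom : Dom [l.sum] := ⟨by simp, by simp, hpos, trivial⟩
  have hpsi : Psi [l.sum] = List.replicate l.sum 1 := by simp [Psi]
  refine psi_inj hd hdom ?_
  rw [hpsi, hrep, hlen]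

lemma psi_gmem : ∀ {l : List ℕ}, Dom l → Gmem (Psi l)
  | [], _ => ⟨⟨by simp [Psi], by simp [Psi]⟩, by simp [Psi], Or.inl (by simp [Psi])⟩
  | p :: rest, ⟨h1, h2, h3, h4⟩ => by
    obtain ⟨⟨ihs, ihp⟩, ihpow, ihcond⟩ := psi_gmem h4
    set a := p - rest.sum with ha
    set M := (Psi rest).map (fun x => 2 * x) with hM
    have hMpos : ∀ q ∈ M, 2 ≤ q := by
      intro q hq
      simp only [hM, List.mem_map] at hq
      obtain ⟨x, hx, rfl⟩ := hq
      have := psi_pos h4 x hx; omega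
    have hmem : ∀ q ∈ Psi (p :: rest), q ∈ List.replicate a 1 ∨ q ∈ M := by
      intro q hq
      simpa [Psi, ← ha, ← hM] using List.mem_append.1 hq
    have hsorted : (Psi (p :: rest)).Pairwise (· ≤ ·) := by
      show (List.replicate a 1 ++ M).Pairwise (· ≤ ·)
      rw [List.pairwise_append]
      refine ⟨List.pairwise_replicate.2 (Or.inr le_rfl), ?_, ?_⟩
      · rw [hM, List.pairwise_map]
        exact ihs.imp (fun h => Nat.mul_le_mul_left 2 h)
      · intro x hx y hy
        rw [List.eq_of_mem_replicate hx]
        exact (hMpos y hy).trans' (by norm_num)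
    have hpsipos : ∀ q ∈ Psi (p :: rest), 0 < q := psi_pos ⟨h1, h2, h3, h4⟩
    have hpow : ∀ q ∈ Psi (p :: rest), ∃ i, q = 2 ^ i := by
      intro q hq
      rcases hmem q hq with hq' | hq'
      · exact ⟨0, by simpa using List.eq_of_mem_replicate hq'⟩
      · simp only [hM, List.mem_map] at hq'
        obtain ⟨x, hx, rfl⟩ := hq'
        obtain ⟨i, rfl⟩ := ihpow x hx
        exact ⟨i+1, by ring⟩
    refine ⟨⟨hsorted, hpsipos⟩, hpow, ?_⟩
    rcases eq_or_ne rest [] with rfl | hrest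
    · left
      intro q hq
      rcases hmem q hq with hq' | hq'
      · exact List.eq_of_mem_replicate hq'
      · simp [hM, Psi] at hq'
    · have hMne : Psi rest ≠ [] := psi_ne_nil h4 hrest
      right
      have hmem' : ∀ q, q ∈ List.replicate a 1 ∨ q ∈ M → q ∈ Psi (p :: rest) := by
        intro q hq
        show q ∈ List.replicate a 1 ++ M
        exact List.mem_append.2 hq
      rcases ihcond with hall | ⟨i, hi1, hi2, hi3, hi4⟩
      · have hr : rest = [rest.sum] := psi_all_ones h4 hrest hall
        have hlt : rest.sum < p := h2 rest.sum (by rw [hr]; simp)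
        have ha1 : 1 ≤ a := by omega
        refine ⟨1, le_rfl, ?_, ?_, ?_⟩
        · refine hmem' _ (Or.inr ?_)
          rw [hM, List.mem_map]
          obtain ⟨x, hx⟩ := List.exists_mem_of_ne_nil _ hMne
          exact ⟨x, hx, by rw [hall x hx]; norm_num⟩
        · intro q hq
          rcases hmem q hq with hq' | hq'
          · rw [List.eq_of_mem_replicate hq']; norm_num
          · simp only [hM, List.mem_map] at hq'
            obtain ⟨x, hx, rfl⟩ := hq'
            rw [hall x hx]; norm_num
        · refine hmem' _ (Or.inl ?_)
          simp only [List.mem_replicate]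
          constructor
          · omega
          · norm_num
      · refine ⟨i + 1, by omega, ?_, ?_, ?_⟩
        · refine hmem' _ (Or.inr ?_)
          rw [hM, List.mem_map]
          exact ⟨2 ^ i, hi2, by ring⟩
        · intro q hq
          rcases hmem q hq with hq' | hq'
          · rw [List.eq_of_mem_replicate hq']
            exact Nat.one_le_two_pow
          · simp only [hM, List.mem_map] at hq'
            obtain ⟨x, hx, rfl⟩ := hq'
            have := hi3 x hx
            calc 2 * x ≤ 2 * 2 ^ i := by omega
              _ = 2 ^ (i+1) := by ring
        · refine hmem' _ (Or.inr ?_)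
          rw [hM, List.mem_map]
          refine ⟨2 ^ (i-1), hi4, ?_⟩
          show 2 * 2 ^ (i-1) = 2 ^ (i + 1 - 1)
          rw [Nat.add_sub_cancel, ← pow_succ']
          congr 1
          omega

lemma ones_prefix : ∀ {t : List ℕ}, t.Pairwise (· ≤ ·) → (∀ p ∈ t, 0 < p) →
    ∃ a u, t = List.replicate a 1 ++ u ∧ ∀ q ∈ u, 2 ≤ q
  | [], _, _ => ⟨0, [], rfl, by simp⟩
  | x :: t', hs, hp => by
    rcases Nat.lt_or_ge x 2 with hx | hx
    · have hx1 : x = 1 := by have := hp x (by simp); omega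
      obtain ⟨a, u, h1, h2⟩ := ones_prefix hs.of_cons (fun p hp' => hp p (by simp [hp']))
      exact ⟨a + 1, u, by rw [List.replicate_succ, List.cons_append, ← h1, hx1], h2⟩
    · refine ⟨0, x :: t', by simp, ?_⟩
      intro q hq
      rcases List.mem_cons.1 hq with rfl | hq
      · exact hx
      · exact hx.trans (List.rel_of_pairwise_cons hs hq)

lemma mem_eq_sum : ∀ {l : List ℕ}, (∀ x ∈ l, 0 < x) → ∀ {q}, q ∈ l → q = l.sum → l = [q]
  | [], _, q, hq, _ => by simp at hq
  | x :: r, hp, q, hq, he => by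
    simp only [List.sum_cons] at he
    rcases List.mem_cons.1 hq with rfl | hq
    · have hr : r = [] := by
        rcases r with _ | ⟨y, r'⟩
        · rfl
        · exfalso
          have hy := hp y (by simp)
          have hle : y ≤ (y :: r').sum := List.single_le_sum (fun x _ => Nat.zero_le x) _ (by simp)
          omega
      rw [hr]
    · exfalso
      have hle : q ≤ r.sum := List.single_le_sum (fun x _ => Nat.zero_le x) _ hq
      have hx := hp x (by simp)
      omega

lemma psi_surj : ∀ n : ℕ, ∀ t : List ℕ, t.sum = n → Gmem t → ∃ l, Dom l ∧ Psi l = t := by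
  intro n
  induction n using Nat.strong_induction_on with
  | _ n IH =>
  rintro t hsum ⟨⟨hts, htp⟩, htpow, htcond⟩
  obtain ⟨a, u, hdecomp, hu2⟩ := ones_prefix hts htp
  rcases eq_or_ne u [] with rfl | hune
  · rcases Nat.eq_zero_or_pos a with rfl | hapos
    · exact ⟨[], trivial, by simp [Psi, hdecomp]⟩
    · refine ⟨[a], ⟨by simp, by simp, hapos, trivial⟩, ?_⟩
      simp [Psi, hdecomp]
  · set μ := u.map (fun q => q / 2) with hμ
    have humem : ∀ q ∈ u, q ∈ t := by
      intro q hq; rw [hdecomp]; exact List.mem_append_right _ hq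
    have hupow : ∀ q ∈ u, ∃ i, 1 ≤ i ∧ q = 2 ^ i := by
      intro q hq
      obtain ⟨i, hi⟩ := htpow q (humem q hq)
      have h2q := hu2 q hq
      refine ⟨i, ?_, hi⟩
      rcases i with _ | i
      · rw [hi] at h2q; norm_num at h2q
      · omega
    have huev : ∀ q ∈ u, 2 * (q / 2) = q := by
      intro q hq
      obtain ⟨i, hi1, rfl⟩ := hupow q hq
      obtain ⟨j, rfl⟩ : ∃ j, i = j + 1 := ⟨i - 1, by omega⟩
      rw [pow_succ]
      omega
    have humap : μ.map (fun x => 2 * x) = u := by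
      rw [hμ, List.map_map]
      have : ∀ q ∈ u, ((fun x => 2 * x) ∘ fun q => q / 2) q = id q := fun q hq => huev q hq
      rw [List.map_congr_left this, List.map_id]
    have hus : u.Pairwise (· ≤ ·) := by
      rw [hdecomp] at hts
      exact ((List.pairwise_append.1 hts).2.1 : _)
    have hμs : μ.Pairwise (· ≤ ·) := by
      rw [hμ, List.pairwise_map]
      exact hus.imp (fun h => Nat.div_le_div_right h)
    have hμp : ∀ x ∈ μ, 0 < x := by
      intro x hx
      rw [hμ, List.mem_map] at hx
      obtain ⟨q, hq, rfl⟩ := hx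
      have := hu2 q hq
      omega
    have hμpow : ∀ x ∈ μ, ∃ i, x = 2 ^ i := by
      intro x hx
      rw [hμ, List.mem_map] at hx
      obtain ⟨q, hq, rfl⟩ := hx
      obtain ⟨i, hi1, rfl⟩ := hupow q hq
      obtain ⟨j, rfl⟩ : ∃ j, i = j + 1 := ⟨i - 1, by omega⟩
      refine ⟨j, ?_⟩
      rw [pow_succ]
      omega
    have hμsum : u.sum = 2 * μ.sum := by
      rw [← humap, List.sum_map_mul_left, List.map_id']
    have hμne : μ ≠ [] := by
      rw [hμ]; simpa using hune
    have hμpos : 0 < μ.sum := List.sum_pos μ hμp hμne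
    have htsum : t.sum = a + u.sum := by
      rw [hdecomp]; simp
    have hmlt : μ.sum < n := by omega
    -- Gmem μ
    have hμcond : (∀ x ∈ μ, x = 1) ∨
        ∃ i, 1 ≤ i ∧ (2:ℕ) ^ i ∈ μ ∧ (∀ x ∈ μ, x ≤ 2 ^ i) ∧ (2:ℕ) ^ (i-1) ∈ μ := by
      rcases htcond with hall | ⟨i, hi1, hi2, hi3, hi4⟩
      · exfalso
        obtain ⟨q, hq⟩ := List.exists_mem_of_ne_nil _ hune
        have := hall q (humem q hq)
        have := hu2 q hq
        omega
      · rcases eq_or_lt_of_le hi1 with hi1' | hi2'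
        · left
          intro x hx
          rw [hμ, List.mem_map] at hx
          obtain ⟨q, hq, rfl⟩ := hx
          have hb := hi3 q (humem q hq)
          have h2 := hu2 q hq
          rw [← hi1'] at hb
          norm_num at hb
          omega
        · right
          have hmem_of : ∀ k : ℕ, 2 ≤ (2:ℕ)^k → (2:ℕ)^k ∈ t → (2:ℕ)^(k-1) ∈ μ ∧ (2:ℕ)^k ∈ u := by
            intro k h2k hkt
            rw [hdecomp, List.mem_append] at hkt
            have hku : (2:ℕ)^k ∈ u := by
              rcases hkt with hk | hk
              · have := List.eq_of_mem_replicate hk; omega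
              · exact hk
            refine ⟨?_, hku⟩
            rw [hμ, List.mem_map]
            refine ⟨2^k, hku, ?_⟩
            obtain ⟨j, rfl⟩ : ∃ j, k = j + 1 := by
              rcases k with _ | j
              · norm_num at h2k
              · exact ⟨j, rfl⟩
            rw [pow_succ, Nat.add_sub_cancel]
            omega
          have h2i : 2 ≤ (2:ℕ)^i := by
            calc (2:ℕ) = 2^1 := (pow_one 2).symm
              _ ≤ 2^i := Nat.pow_le_pow_right (by norm_num) hi1
          have h2i1 : 2 ≤ (2:ℕ)^(i-1) := by
            calc (2:ℕ) = 2^1 := (pow_one 2).symm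
              _ ≤ 2^(i-1) := Nat.pow_le_pow_right (by norm_num) (by omega)
          obtain ⟨hm1, hu1⟩ := hmem_of i h2i hi2
          obtain ⟨hm2, hu2'⟩ := hmem_of (i-1) h2i1 hi4
          refine ⟨i - 1, by omega, hm1, ?_, ?_⟩
          · intro x hx
            rw [hμ, List.mem_map] at hx
            obtain ⟨q, hq, rfl⟩ := hx
            have hb := hi3 q (humem q hq)
            have : q / 2 ≤ 2^i / 2 := Nat.div_le_div_right hb
            have hdiv : (2:ℕ)^i / 2 = 2^(i-1) := by
              obtain ⟨j, rfl⟩ : ∃ j, i = j + 1 := ⟨i - 1, by omega⟩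
              rw [pow_succ, Nat.add_sub_cancel]
              omega
            omega
          · have : i - 1 - 1 = i - 2 := by omega
            rw [this]
            have : (i - 1) - 1 = i - 2 := by omega
            rw [← this]
            exact hm2
    obtain ⟨l', hl'dom, hl'psi⟩ := IH μ.sum hmlt μ rfl ⟨⟨hμs, hμp⟩, hμpow, hμcond⟩
    have hl'sum : l'.sum = μ.sum := by
      rw [← psi_sum hl'dom, hl'psi]
    refine ⟨(μ.sum + a) :: l', ⟨by omega, ?_, by omega, hl'dom⟩, ?_⟩
    · intro q hq
      have hqle : q ≤ l'.sum := hl'dom.le_sum q hq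
      rcases Nat.eq_zero_or_pos a with rfl | hapos
      · -- need q < μ.sum
        rcases eq_or_lt_of_le hqle with hqe | hql
        · exfalso
          have hsingle : l' = [q] := mem_eq_sum (hl'dom.pos) hq hqe
          have : μ = List.replicate q 1 := by
            rw [← hl'psi, hsingle]
            simp [Psi]
          -- μ all ones, contradiction with a = 0
          have hall1 : ∀ x ∈ μ, x = 1 := by
            rw [this]; intro x hx; exact List.eq_of_mem_replicate hx
          rcases hμcond with h | ⟨i, hi1, hi2, hi3, hi4⟩
          · -- then every q in u is 2; use htcond on t = u
            simp only [List.replicate, List.nil_append] at hdecomp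
            rcases htcond with hall | ⟨i, hi1, hi2, hi3, hi4⟩
            · obtain ⟨w, hw⟩ := List.exists_mem_of_ne_nil _ hune
              have := hall w (humem w hw)
              have := hu2 w hw
              omega
            · -- 2^(i-1) ∈ t = u so ≥ 2 so i ≥ 2; 2^i ∈ u but all u elements = 2
              have hallu2 : ∀ w ∈ u, w = 2 := by
                intro w hw
                have h1 := h (w / 2) (by rw [hμ, List.mem_map]; exact ⟨w, hw, rfl⟩)
                have h2 := huev w hw
                omega
              have hi4u : (2:ℕ)^(i-1) ∈ u := by rw [← hdecomp]; exact hi4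
              have hi2u : (2:ℕ)^i ∈ u := by rw [← hdecomp]; exact hi2
              have e2 := hallu2 _ hi2u
              have hieq : i = 1 :=
                Nat.pow_right_injective le_rfl (e2.trans (pow_one 2).symm)
              rw [hieq] at hi4u
              norm_num at hi4u
              have := hu2 _ hi4u
              omega
          · have h2i : 2 ≤ (2:ℕ)^i :=
              calc (2:ℕ) = 2^1 := (pow_one 2).symm
                _ ≤ 2^i := Nat.pow_le_pow_right (by norm_num) hi1
            have := hall1 _ hi2
            omega
        · omega
      · omega
    · show List.replicate (μ.sum + a - l'.sum) 1 ++ (Psi l').map (fun x => 2 * x) = t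
      rw [hl'psi, humap, hl'sum, hdecomp]
      congr 1
      congr 1
      omega

lemma nsq_append {ρ : List ℕ} {p : ℕ} :
    NSq 2 (ρ ++ [p]) ↔ NSq 2 ρ ∧ ρ.sum ≤ p := by
  constructor
  · intro h
    constructor
    · intro j hj hjl
      have := h j hj (by simp only [List.length_append, List.length_singleton]; omega)
      rwa [take_append_le (le_of_lt hjl), List.getD_append _ _ _ _ hjl] at this
    · rcases Nat.eq_zero_or_pos ρ.length with hl | hl
      · have : ρ = [] := List.length_eq_zero_iff.1 hl
        simp [this]
      · have := h ρ.length hl (by simp)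
        rw [List.take_left, List.getD_append_right _ _ _ _ le_rfl, Nat.sub_self] at this
        simpa using this
  · rintro ⟨h1, h2⟩ j hj hjl
    simp only [List.length_append, List.length_singleton] at hjl
    rcases Nat.lt_or_ge j ρ.length with hlt | hge
    · rw [take_append_le (le_of_lt hlt), List.getD_append _ _ _ _ hlt]
      exact h1 j hj hlt
    · have hje : j = ρ.length := by omega
      subst hje
      rw [List.take_left, List.getD_append_right _ _ _ _ le_rfl, Nat.sub_self]
      simpa using h2

lemma dom_iff : ∀ (lr : List ℕ), Dom lr ↔ (DistinctPartList lr.reverse ∧ NSq 2 lr.reverse)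
  | [] => by
    constructor
    · intro _
      refine ⟨⟨by simp, by simp⟩, ?_⟩
      intro j hj hjl
      simp at hjl
    · intro _
      trivial
  | p :: rest => by
    rw [List.reverse_cons]
    have IH := dom_iff rest
    constructor
    · rintro ⟨ha, hb, hc, hd⟩
      obtain ⟨⟨hs, hp⟩, hn⟩ := IH.1 hd
      refine ⟨⟨?_, ?_⟩, ?_⟩
      · rw [List.pairwise_append]
        refine ⟨hs, by simp, ?_⟩
        intro x hx y hy
        rw [List.mem_singleton.1 hy]
        exact hb x (List.mem_reverse.1 hx)
      · intro q hq
        rcases List.mem_append.1 hq with hq | hq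
        · exact hp q hq
        · rw [List.mem_singleton.1 hq]; exact hc
      · refine nsq_append.2 ⟨hn, ?_⟩
        rw [List.sum_reverse]
        exact ha
    · rintro ⟨⟨hsort, hpos⟩, hnsq⟩
      obtain ⟨hsρ, -, hcross⟩ := List.pairwise_append.1 hsort
      obtain ⟨hnρ, hsum⟩ := nsq_append.1 hnsq
      refine ⟨by rwa [List.sum_reverse] at hsum, ?_, hpos p (by simp), ?_⟩
      · intro q hq
        exact hcross q (List.mem_reverse.2 hq) p (by simp)
      · exact IH.2 ⟨⟨hsρ, fun q hq => hpos q (List.mem_append_left _ hq)⟩, hnρ⟩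

theorem stmt_7 (n : ℕ) :
    b n = {l : List ℕ | IsPartList l ∧ (∀ p ∈ l, ∃ i, p = 2 ^ i) ∧ l.sum = n ∧
      ((∀ p ∈ l, p = 1) ∨
        ∃ i, 1 ≤ i ∧ (2 : ℕ) ^ i ∈ l ∧ (∀ p ∈ l, p ≤ 2 ^ i) ∧ (2 : ℕ) ^ (i - 1) ∈ l)}.ncard := by
  classical
  have key : {l : List ℕ | IsPartList l ∧ (∀ p ∈ l, ∃ i, p = 2 ^ i) ∧ l.sum = n ∧
      ((∀ p ∈ l, p = 1) ∨
        ∃ i, 1 ≤ i ∧ (2 : ℕ) ^ i ∈ l ∧ (∀ p ∈ l, p ≤ 2 ^ i) ∧ (2 : ℕ) ^ (i - 1) ∈ l)}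
      = (fun l : List ℕ => Psi l.reverse) ''
        {l : List ℕ | DistinctPartList l ∧ NSq 2 l ∧ l.sum = n} := by
    ext t
    simp only [Set.mem_image, Set.mem_setOf_eq]
    constructor
    · rintro ⟨h1, h2, h3, h4⟩
      obtain ⟨l', hdom, hpsi⟩ := psi_surj t.sum t rfl ⟨h1, h2, h4⟩
      refine ⟨l'.reverse, ⟨?_, ?_, ?_⟩, by rw [List.reverse_reverse, hpsi]⟩
      · exact ((dom_iff l').1 hdom).1
      · exact ((dom_iff l').1 hdom).2
      · have hs := psi_sum hdom
        rw [hpsi] at hs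
        rw [List.sum_reverse]
        omega
    · rintro ⟨l, ⟨hdp, hns, hsum⟩, rfl⟩
      have hdom : Dom l.reverse :=
        (dom_iff l.reverse).2 (by rw [List.reverse_reverse]; exact ⟨hdp, hns⟩)
      obtain ⟨hip, hpow, hcond⟩ := psi_gmem hdom
      refine ⟨hip, hpow, ?_, hcond⟩
      rw [psi_sum hdom, List.sum_reverse, hsum]
  have hinj : Set.InjOn (fun l : List ℕ => Psi l.reverse)
      {l : List ℕ | DistinctPartList l ∧ NSq 2 l ∧ l.sum = n} := by
    rintro l1 ⟨h1a, h1b, -⟩ l2 ⟨h2a, h2b, -⟩ h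
    have d1 : Dom l1.reverse :=
      (dom_iff l1.reverse).2 (by rw [List.reverse_reverse]; exact ⟨h1a, h1b⟩)
    have d2 : Dom l2.reverse :=
      (dom_iff l2.reverse).2 (by rw [List.reverse_reverse]; exact ⟨h2a, h2b⟩)
    exact List.reverse_injective (psi_inj d1 d2 h)
  rw [b, key, Set.ncard_image_of_injOn hinj]
end

section
/- For all m ≥ 0, b(16m+4) is even and b(16m+12) is odd, where b(n) is the number of non-squashing partitions of n into distinct parts. -/
def S (n : ℕ) : Set (List ℕ) := {l | DistinctPartList l ∧ NSq 2 l ∧ l.sum = n}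

lemma b_eq (n : ℕ) : b n = (S n).ncard := rfl

lemma list_eq_singleton {l : List ℕ} (hpos : ∀ q ∈ l, 0 < q) {q : ℕ}
    (hq : q ∈ l) (hs : l.sum = q) : l = [q] := by
  obtain ⟨s, t, rfl⟩ := List.append_of_mem hq
  rw [List.sum_append, List.sum_cons] at hs
  have hs0 : s.sum = 0 ∧ t.sum = 0 := by omega
  have : s = [] := by
    rcases s with _ | ⟨a, s⟩
    · rfl
    · exfalso; have := hpos a (by simp); simp [List.sum_cons] at hs0; omega
  subst this
  have : t = [] := by
    rcases t with _ | ⟨a, t⟩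
    · rfl
    · exfalso; have := hpos a (by simp); simp [List.sum_cons] at hs0; omega
  simp [this]

lemma singleton_mem {p : ℕ} (hp : 0 < p) : [p] ∈ S p := by
  refine ⟨⟨by simp, by simpa using hp⟩, ?_, by simp⟩
  intro j hj hjl
  simp at hjl; omega

lemma nsq_concat (l : List ℕ) (p : ℕ) :
    NSq 2 (l ++ [p]) ↔ NSq 2 l ∧ (l = [] ∨ l.sum ≤ p) := by
  unfold NSq
  simp only [List.length_append, List.length_singleton]
  constructor
  · intro h
    constructor
    · intro j hj hjl
      have := h j hj (by omega)
      rwa [List.take_append, Nat.sub_eq_zero_of_le (le_of_lt hjl),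
        List.take_zero, List.append_nil, List.getD_append _ _ _ _ hjl] at this
    · rcases Nat.eq_zero_or_pos l.length with h0 | h0
      · left; exact List.eq_nil_of_length_eq_zero h0
      · right
        have := h l.length h0 (by omega)
        rw [List.take_append, Nat.sub_self, List.take_zero,
          List.append_nil, List.take_length, List.getD_append_right _ _ _ _ (le_refl _),
          Nat.sub_self] at this
        simpa using this
  · rintro ⟨h1, h2⟩ j hj hjl
    rcases lt_or_eq_of_le (Nat.lt_succ_iff.mp hjl) with hlt | heq
    · rw [List.take_append, Nat.sub_eq_zero_of_le (le_of_lt hlt),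
        List.take_zero, List.append_nil, List.getD_append _ _ _ _ hlt]
      exact h1 j hj hlt
    · subst heq
      rw [List.take_append, Nat.sub_self, List.take_zero,
        List.append_nil, List.take_length, List.getD_append_right _ _ _ _ (le_refl _),
        Nat.sub_self]
      rcases h2 with h2 | h2
      · subst h2; simp
      · simpa using h2

lemma concat_mem_iff {l : List ℕ} {p : ℕ} (hp : 0 < p) :
    (l ++ [p]) ∈ S (l.sum + p) ↔ l ∈ S l.sum ∧ l.sum ≤ p ∧ l ≠ [p] := by
  constructor
  · rintro ⟨⟨hsort, hpos⟩, hnsq, -⟩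
    rw [List.pairwise_append] at hsort
    obtain ⟨hs1, -, hlt⟩ := hsort
    rw [nsq_concat] at hnsq
    have hsum : l.sum ≤ p := by
      rcases hnsq.2 with h | h
      · subst h; simp
      · exact h
    refine ⟨⟨⟨hs1, fun q hq => hpos q (by simp [hq])⟩, hnsq.1, rfl⟩, hsum, ?_⟩
    rintro rfl
    exact lt_irrefl p (by simpa using hlt p (by simp) p (by simp))
  · rintro ⟨⟨⟨hs1, hpos⟩, hnsq, -⟩, hsum, hne⟩
    refine ⟨⟨?_, ?_⟩, ?_, by simp⟩
    · rw [List.pairwise_append]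
      refine ⟨hs1, by simp, ?_⟩
      intro a ha c hc
      simp only [List.mem_singleton] at hc; subst hc
      have hle : a ≤ l.sum := List.single_le_sum (fun x _ => Nat.zero_le x) a ha
      rcases lt_or_eq_of_le (le_trans hle hsum) with h | h
      · exact h
      · exfalso
        subst h
        exact hne (list_eq_singleton hpos ha (le_antisymm hsum hle))
    · intro q hq
      rcases List.mem_append.mp hq with h | h
      · exact hpos q h
      · simp only [List.mem_singleton] at h; subst h; exact hp
    · rw [nsq_concat]; exact ⟨hnsq, Or.inr hsum⟩

lemma S_finite (n : ℕ) : (S n).Finite := by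
  apply Set.Finite.subset
    (Set.Finite.image (fun A : Finset ℕ => A.sort (· ≤ ·))
      (((Finset.range (n + 1)).powerset).finite_toSet))
  rintro l ⟨⟨hsort, hpos⟩, -, hsum⟩
  have hnd : l.Nodup := hsort.nodup
  refine ⟨l.toFinset, ?_, ?_⟩
  · simp only [Finset.coe_powerset, Set.mem_preimage, Set.mem_powerset_iff,
      Finset.coe_subset, Finset.mem_coe]
    intro q hq
    rw [List.mem_toFinset] at hq
    have : q ≤ l.sum := List.single_le_sum (fun x _ => Nat.zero_le x) q hq
    exact Finset.mem_range.mpr (by omega)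
  · exact (List.toFinset_sort _ hnd).mpr (hsort.imp le_of_lt)

def f (l : List ℕ) : List ℕ := l.dropLast ++ [l.getLast?.getD 0 + 1]

lemma f_concat (l : List ℕ) (p : ℕ) : f (l ++ [p]) = l ++ [p + 1] := by
  simp [f]

lemma concat_eq_concat {l₁ l₂ : List ℕ} {a c : ℕ} (h : l₁ ++ [a] = l₂ ++ [c]) :
    l₁ = l₂ ∧ a = c := by
  have := List.append_inj' h rfl
  simpa using this

lemma mem_S_decomp {n : ℕ} (hn : 0 < n) {l : List ℕ} (hl : l ∈ S n) :
    ∃ l' p, l = l' ++ [p] ∧ 0 < p ∧ l' ∈ S l'.sum ∧ l'.sum ≤ p ∧ l' ≠ [p] ∧ l'.sum + p = n := by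
  rcases List.eq_nil_or_concat l with rfl | ⟨l', p, hlp⟩
  · exfalso; have := hl.2.2; simp at this; omega
  · rw [List.concat_eq_append] at hlp
    subst hlp
    have hsum : l'.sum + p = n := by
      have := hl.2.2; simpa using this
    have hp : 0 < p := hl.1.2 p (by simp)
    rw [← hsum] at hl
    obtain ⟨h1, h2, h3⟩ := (concat_mem_iff hp).mp hl
    exact ⟨l', p, rfl, hp, h1, h2, h3, hsum⟩

lemma S_odd_eq (m : ℕ) (hm : 1 ≤ m) :
    S (2*m+1) = insert ([m] ++ [m+1]) (f '' S (2*m)) := by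
  ext l
  constructor
  · intro hl
    obtain ⟨l', p, rfl, hp, hl', hle, hne, hsum⟩ := mem_S_decomp (by omega) hl
    have hpge : m + 1 ≤ p := by omega
    rcases eq_or_lt_of_le hpge with heq | hlt
    · have hsl : l'.sum = m := by omega
      by_cases hcase : l' = [m]
      · left; rw [hcase]; rw [← heq]
      · right
        refine ⟨l' ++ [m], ?_, ?_⟩
        · have h : (l' ++ [m]) ∈ S (l'.sum + m) :=
            (concat_mem_iff (by omega)).mpr ⟨hl', by omega, hcase⟩
          rwa [show l'.sum + m = 2*m from by omega] at h
        · rw [f_concat, heq]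
    · right
      refine ⟨l' ++ [p-1], ?_, ?_⟩
      · have hne' : l' ≠ [p-1] := by
          intro h; rw [h] at hsum hle; simp at hsum hle; omega
        have h : (l' ++ [p-1]) ∈ S (l'.sum + (p-1)) :=
          (concat_mem_iff (by omega)).mpr ⟨hl', by omega, hne'⟩
        rwa [show l'.sum + (p-1) = 2*m from by omega] at h
      · rw [f_concat]; congr 2; omega
  · intro hl
    rcases hl with hl | ⟨l', hl', rfl⟩
    · rw [hl]
      have h : ([m] ++ [m+1]) ∈ S (List.sum [m] + (m+1)) := by
        refine (concat_mem_iff (by omega)).mpr ⟨?_, by simp, by simp⟩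
        refine ⟨⟨by simp, by simp; omega⟩, ?_, by simp⟩
        intro j hj hjl; simp at hjl; omega
      rwa [show List.sum [m] + (m+1) = 2*m+1 from by simp; omega] at h
    · obtain ⟨l'', q, rfl, hq, hl'', hle, hne, hsum⟩ := mem_S_decomp (by omega) hl'
      rw [f_concat]
      have hne' : l'' ≠ [q+1] := by
        intro h; rw [h] at hle; simp at hle
      have h : (l'' ++ [q+1]) ∈ S (l''.sum + (q+1)) :=
        (concat_mem_iff (by omega)).mpr ⟨hl'', by omega, hne'⟩
      rwa [show l''.sum + (q+1) = 2*m+1 from by omega] at h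

lemma S_even_eq (m : ℕ) :
    S (2*m+2) = (f '' S (2*m+1)) ∪ ((· ++ [m+1]) '' (S (m+1) \ {[m+1]})) := by
  ext l
  constructor
  · intro hl
    obtain ⟨l', p, rfl, hp, hl', hle, hne, hsum⟩ := mem_S_decomp (by omega) hl
    have hpge : m + 1 ≤ p := by omega
    rcases eq_or_lt_of_le hpge with heq | hlt
    · right
      refine ⟨l', ⟨?_, ?_⟩, by rw [heq]⟩
      · rwa [show l'.sum = m+1 from by omega] at hl'
      · simp only [Set.mem_singleton_iff]
        rw [heq]; exact hne
    · left
      refine ⟨l' ++ [p-1], ?_, ?_⟩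
      · have hne' : l' ≠ [p-1] := by
          intro h; rw [h] at hsum; simp at hsum; omega
        have h : (l' ++ [p-1]) ∈ S (l'.sum + (p-1)) :=
          (concat_mem_iff (by omega)).mpr ⟨hl', by omega, hne'⟩
        rwa [show l'.sum + (p-1) = 2*m+1 from by omega] at h
      · rw [f_concat]; congr 2; omega
  · intro hl
    rcases hl with ⟨l', hl', rfl⟩ | ⟨l', ⟨hl', hne1⟩, rfl⟩
    · obtain ⟨l'', q, rfl, hq, hl'', hle, hne, hsum⟩ := mem_S_decomp (by omega) hl'
      rw [f_concat]
      have hne' : l'' ≠ [q+1] := by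
        intro h; rw [h] at hle; simp at hle
      have h : (l'' ++ [q+1]) ∈ S (l''.sum + (q+1)) :=
        (concat_mem_iff (by omega)).mpr ⟨hl'', by omega, hne'⟩
      rwa [show l''.sum + (q+1) = 2*m+2 from by omega] at h
    · simp only [Set.mem_singleton_iff] at hne1
      have hsl : l'.sum = m + 1 := hl'.2.2
      have h : (l' ++ [m+1]) ∈ S (l'.sum + (m+1)) := by
        refine (concat_mem_iff (by omega)).mpr ⟨?_, by omega, hne1⟩
        rw [hsl]; exact hl'
      rwa [show l'.sum + (m+1) = 2*m+2 from by omega] at h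

lemma f_injOn {n : ℕ} (hn : 0 < n) : Set.InjOn f (S n) := by
  intro l₁ h₁ l₂ h₂ hf
  obtain ⟨a, p, rfl, -, -, -, -, -⟩ := mem_S_decomp hn h₁
  obtain ⟨c, q, rfl, -, -, -, -, -⟩ := mem_S_decomp hn h₂
  rw [f_concat, f_concat] at hf
  obtain ⟨h1, h2⟩ := concat_eq_concat hf
  rw [h1, show p = q from by omega]

lemma b_odd {a c m : ℕ} (hm : 1 ≤ m) (h1 : a = 2*m+1) (h2 : c = 2*m) :
    b a = b c + 1 := by
  subst h1 h2
  rw [b_eq, b_eq, S_odd_eq m hm]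
  have hnm : ([m] ++ [m+1]) ∉ f '' S (2*m) := by
    rintro ⟨l, hl, hfl⟩
    obtain ⟨l', q, rfl, hq, hl', hle, hne, hsum⟩ := mem_S_decomp (by omega) hl
    rw [f_concat] at hfl
    obtain ⟨e1, e2⟩ := concat_eq_concat hfl
    apply hne
    rw [e1, show q = m from by omega]
  rw [Set.ncard_insert_of_notMem hnm ((S_finite _).image f)]
  rw [Set.ncard_image_of_injOn (f_injOn (by omega))]

lemma b_even {a c d m : ℕ} (h1 : a = 2*m+2) (h2 : c = 2*m+1) (h3 : d = m+1) :
    b a + 1 = b c + b d := by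
  subst h1 h2 h3
  rw [b_eq, b_eq, b_eq, S_even_eq m]
  have hdisj : Disjoint (f '' S (2*m+1)) ((· ++ [m+1]) '' (S (m+1) \ {[m+1]})) := by
    rw [Set.disjoint_left]
    rintro x ⟨l, hl, rfl⟩ ⟨l₂, hl₂, he⟩
    obtain ⟨l', q, rfl, hq, hl', hle, hne, hsum⟩ := mem_S_decomp (by omega) hl
    rw [f_concat] at he
    obtain ⟨e1, e2⟩ := concat_eq_concat he.symm
    omega
  have happ : Set.InjOn (· ++ [m+1]) (S (m+1) \ {[m+1]}) := by
    intro l₁ h₁ l₂ h₂ he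
    exact (concat_eq_concat he).1
  rw [Set.ncard_union_eq hdisj ((S_finite _).image f)
      ((S_finite _).diff.image _)]
  rw [Set.ncard_image_of_injOn (f_injOn (by omega)),
      Set.ncard_image_of_injOn happ]
  have hmem : [m+1] ∈ S (m+1) := singleton_mem (by omega)
  have hd : (S (m+1) \ {[m+1]}).ncard = (S (m+1)).ncard - 1 :=
    Set.ncard_diff_singleton_of_mem hmem
  have hpos : 0 < (S (m+1)).ncard :=
    (Set.ncard_pos (S_finite _)).mpr ⟨_, hmem⟩
  omega

lemma S_one : S 1 = {[1]} := by
  ext l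
  constructor
  · rintro ⟨⟨-, hpos⟩, -, hsum⟩
    rcases l with _ | ⟨q, t⟩
    · simp at hsum
    · rcases t with _ | ⟨r, t'⟩
      · have := hpos q (by simp); simp at hsum ⊢; omega
      · have h1 := hpos q (by simp)
        have h2 := hpos r (by simp)
        simp [List.sum_cons] at hsum
        omega
  · rintro rfl
    exact singleton_mem (by omega)

lemma b_one : b 1 = 1 := by
  rw [b_eq, S_one]
  exact Set.ncard_singleton _

lemma key (m : ℕ) : b (8*m+2) % 2 = 1 ∧ b (8*m+6) % 2 = 0 := by
  induction m with
  | zero =>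
    have e1 : b 2 + 1 = b 1 + b 1 := b_even (m := 0) (by ring) (by ring) (by ring)
    have e2 : b 3 = b 2 + 1 := b_odd (m := 1) (by omega) (by ring) (by ring)
    have e3 : b 4 + 1 = b 3 + b 2 := b_even (m := 1) (by ring) (by ring) (by ring)
    have e4 : b 5 = b 4 + 1 := b_odd (m := 2) (by omega) (by ring) (by ring)
    have e5 : b 6 + 1 = b 5 + b 3 := b_even (m := 2) (by ring) (by ring) (by ring)
    have e0 := b_one
    norm_num
    omega
  | succ t ih =>
    have e1 : b (8*t+10) + 1 = b (8*t+9) + b (4*t+5) :=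
      b_even (m := 4*t+4) (by ring) (by ring) (by ring)
    have e2 : b (8*t+9) = b (8*t+8) + 1 := b_odd (m := 4*t+4) (by omega) (by ring) (by ring)
    have e3 : b (8*t+8) + 1 = b (8*t+7) + b (4*t+4) :=
      b_even (m := 4*t+3) (by ring) (by ring) (by ring)
    have e4 : b (8*t+7) = b (8*t+6) + 1 := b_odd (m := 4*t+3) (by omega) (by ring) (by ring)
    have e5 : b (4*t+5) = b (4*t+4) + 1 := b_odd (m := 2*t+2) (by omega) (by ring) (by ring)
    have f1 : b (8*t+14) + 1 = b (8*t+13) + b (4*t+7) :=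
      b_even (m := 4*t+6) (by ring) (by ring) (by ring)
    have f2 : b (8*t+13) = b (8*t+12) + 1 := b_odd (m := 4*t+6) (by omega) (by ring) (by ring)
    have f3 : b (8*t+12) + 1 = b (8*t+11) + b (4*t+6) :=
      b_even (m := 4*t+5) (by ring) (by ring) (by ring)
    have f4 : b (8*t+11) = b (8*t+10) + 1 := b_odd (m := 4*t+5) (by omega) (by ring) (by ring)
    have f5 : b (4*t+7) = b (4*t+6) + 1 := b_odd (m := 2*t+3) (by omega) (by ring) (by ring)
    rw [show 8*(t+1)+2 = 8*t+10 from by ring, show 8*(t+1)+6 = 8*t+14 from by ring]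
    omega

theorem stmt_9 (m : ℕ) : Even (b (16 * m + 4)) ∧ Odd (b (16 * m + 12)) := by
  obtain ⟨h2, -⟩ := key (2*m)
  obtain ⟨h10, -⟩ := key (2*m+1)
  obtain ⟨hA, hB⟩ := key m
  rw [show 8*(2*m)+2 = 16*m+2 from by ring] at h2
  rw [show 8*(2*m+1)+2 = 16*m+10 from by ring] at h10
  have e1 : b (16*m+4) + 1 = b (16*m+3) + b (8*m+2) :=
    b_even (m := 8*m+1) (by ring) (by ring) (by ring)
  have e2 : b (16*m+3) = b (16*m+2) + 1 := b_odd (m := 8*m+1) (by omega) (by ring) (by ring)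
  have e3 : b (16*m+12) + 1 = b (16*m+11) + b (8*m+6) :=
    b_even (m := 8*m+5) (by ring) (by ring) (by ring)
  have e4 : b (16*m+11) = b (16*m+10) + 1 := b_odd (m := 8*m+5) (by omega) (by ring) (by ring)
  constructor
  · rw [Nat.even_iff]; omega
  · rw [Nat.odd_iff]; omega
end

section
/- For m > 0, the parity of b(8m) equals the value of the binary digit of m immediately to the left of the rightmost 1 in the binary expansion of m. -/
namespace Stmt11Aux

def A (n : ℕ) : Set (List ℕ) := {l : List ℕ | DistinctPartList l ∧ NSq 2 l ∧ l.sum = n}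

lemma b_eq (n : ℕ) : b n = (A n).ncard := rfl

lemma mem_le_sum {l : List ℕ} {x : ℕ} (hx : x ∈ l) : x ≤ l.sum :=
  List.single_le_sum (fun _ _ => Nat.zero_le _) x hx

lemma length_le_sum {l : List ℕ} (h : ∀ p ∈ l, 0 < p) : l.length ≤ l.sum := by
  induction l with
  | nil => simp
  | cons a t ih =>
    simp only [List.length_cons, List.sum_cons]
    have ha := h a (by simp)
    have := ih (fun p hp => h p (by simp [hp]))
    omega

lemma finiteA (n : ℕ) : (A n).Finite := by
  have hsub : A n ⊆ (fun l : List (Fin (n+1)) => l.map Fin.val) '' {l | l.length ≤ n} := by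
    rintro l ⟨⟨_, hpos⟩, _, hsum⟩
    have hle : ∀ x ∈ l, x ≤ n := fun x hx => hsum ▸ mem_le_sum hx
    refine ⟨l.attach.map (fun x => (⟨x.1, Nat.lt_succ_of_le (hle x.1 x.2)⟩ : Fin (n+1))), ?_, ?_⟩
    · simp only [Set.mem_setOf_eq, List.length_map, List.length_attach]
      exact hsum ▸ length_le_sum hpos
    · simp [List.map_map, Function.comp]
  exact Set.Finite.subset ((List.finite_length_le _ n).image _) hsub

noncomputable def F (n : ℕ) : Finset (List ℕ) := (finiteA n).toFinset

lemma card_F (n : ℕ) : b n = (F n).card := by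
  rw [b_eq, Set.ncard_eq_toFinset_card _ (finiteA n)]; rfl

lemma mem_F {n : ℕ} {l : List ℕ} : l ∈ F n ↔ l ∈ A n := (finiteA n).mem_toFinset

lemma mem_A {n : ℕ} {l : List ℕ} :
    l ∈ A n ↔ DistinctPartList l ∧ NSq 2 l ∧ l.sum = n := Iff.rfl

lemma singleton_mem_A {r p : ℕ} : [p] ∈ A r ↔ r = p ∧ 0 < p := by
  constructor
  · rintro ⟨⟨_, hpos⟩, _, hsum⟩
    exact ⟨by simpa using hsum.symm, hpos p (by simp)⟩
  · rintro ⟨rfl, hp⟩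
    refine ⟨⟨by simp, by simpa using hp⟩, ?_, by simp⟩
    intro j hj hj'; simp at hj'; omega

lemma sum_eq_mem {t : List ℕ} {x : ℕ} (hpos : ∀ y ∈ t, 0 < y) (hx : x ∈ t)
    (hsum : t.sum = x) : t = [x] := by
  obtain ⟨s, u, rfl⟩ := List.mem_iff_append.mp hx
  simp only [List.sum_append, List.sum_cons] at hsum
  have hs : s.sum = 0 := by omega
  have hu : u.sum = 0 := by omega
  have hs' : s = [] := by
    rcases s with _ | ⟨a, s⟩
    · rfl
    · have := List.sum_eq_zero_iff.mp hs a (by simp)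
      have := hpos a (by simp)
      omega
  have hu' : u = [] := by
    rcases u with _ | ⟨a, u⟩
    · rfl
    · have := List.sum_eq_zero_iff.mp hu a (by simp)
      have := hpos a (by simp)
      omega
  simp [hs', hu']

/-- The key decomposition: remove the largest part. -/
lemma F_eq (n : ℕ) (hn : 0 < n) :
    F n = (Finset.Icc ((n+1)/2) n).biUnion
      (fun p => ((F (n-p)).erase [p]).image (fun t => t ++ [p])) := by
  ext l
  simp only [Finset.mem_biUnion, Finset.mem_image, Finset.mem_erase, Finset.mem_Icc, mem_F]
  constructor
  · intro hl
    obtain ⟨⟨hsort, hpos⟩, hnsq, hsum⟩ := hl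
    have hne : l ≠ [] := by rintro rfl; simp at hsum; omega
    set p := l.getLast hne with hp
    set t := l.dropLast with ht
    have hlt : t ++ [p] = l := List.dropLast_append_getLast hne
    have hlen : l.length = t.length + 1 := by rw [← hlt]; simp
    have hsum' : t.sum + p = n := by rw [← hsum, ← hlt]; simp
    have hpn : p ≤ n := hsum ▸ mem_le_sum (List.getLast_mem hne)
    have htp : t.sum ≤ p := by
      rcases Nat.eq_zero_or_pos t.length with h0 | h0
      · simp [List.length_eq_zero_iff.mp h0]
      · have := hnsq t.length h0 (by omega)
        rw [← hlt] at this
        simpa [List.take_left] using this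
    refine ⟨p, ⟨by omega, hpn⟩, t, ⟨?_, ?_⟩, hlt⟩
    · intro h
      rw [h] at hlt
      rw [← hlt] at hsort
      simp [List.pairwise_append] at hsort
    · refine ⟨⟨hsort.sublist (ht ▸ List.dropLast_sublist l),
        fun q hq => hpos q ((ht ▸ List.dropLast_sublist l).subset hq)⟩, ?_, by omega⟩
      intro j hj hj'
      have h1 : l.take j = t.take j := by
        rw [← hlt, List.take_append_of_le_length (by omega)]
      have h2 : l.getD j 0 = t.getD j 0 := by
        rw [← hlt, List.getD_append _ _ _ _ hj']
      have := hnsq j hj (by omega)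
      rw [h1, h2] at this
      exact this
  · rintro ⟨p, ⟨hp1, hp2⟩, t, ⟨htne, ⟨htsort, htpos⟩, htnsq, htsum⟩, rfl⟩
    have hn2p : n ≤ 2 * p := by omega
    have hp0 : 0 < p := by omega
    have hxlt : ∀ x ∈ t, x < p := by
      intro x hx
      have hxs : x ≤ t.sum := mem_le_sum hx
      rcases Nat.lt_or_ge x p with h | h
      · exact h
      · exfalso
        have hxp : x = p := by omega
        have : t.sum = x := by omega
        exact htne (hxp ▸ sum_eq_mem htpos hx this)
    refine ⟨⟨?_, ?_⟩, ?_, ?_⟩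
    · rw [List.pairwise_append]
      exact ⟨htsort, by simp, fun x hx y hy => by simp at hy; exact hy ▸ hxlt x hx⟩
    · intro q hq
      rcases List.mem_append.mp hq with h | h
      · exact htpos q h
      · simp at h; omega
    · intro j hj hj'
      simp only [List.length_append, List.length_singleton] at hj'
      rcases Nat.lt_or_ge j t.length with h | h
      · have h1 : (t ++ [p]).take j = t.take j :=
          List.take_append_of_le_length (by omega)
        have h2 : (t ++ [p]).getD j 0 = t.getD j 0 := List.getD_append _ _ _ _ h
        rw [h1, h2]
        exact htnsq j hj h
      · have hje : j = t.length := by omega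
        subst hje
        have h1 : (t ++ [p]).take t.length = t := List.take_left
        have h2 : (t ++ [p]).getD t.length 0 = p := by simp [List.getD]
        rw [h1, h2]
        omega
    · simp [htsum]; omega

lemma rec1 (n : ℕ) (hn : 0 < n) :
    b n + (if Even n then 1 else 0) = ∑ r ∈ Finset.range (n/2 + 1), b r := by
  have hdisj : ∀ p ∈ Finset.Icc ((n+1)/2) n, ∀ q ∈ Finset.Icc ((n+1)/2) n, p ≠ q →
      Disjoint (((F (n-p)).erase [p]).image (fun t => t ++ [p]))
               (((F (n-q)).erase [q]).image (fun t => t ++ [q])) := by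
    intro p _ q _ hpq
    simp only [Finset.disjoint_left, Finset.mem_image]
    rintro l ⟨t, _, rfl⟩ ⟨u, _, hu⟩
    rw [← List.concat_eq_append, ← List.concat_eq_append] at hu
    exact hpq (List.concat_inj.mp hu).2.symm
  have hcard := congrArg Finset.card (F_eq n hn)
  rw [Finset.card_biUnion hdisj] at hcard
  have himg : ∀ p, (((F (n-p)).erase [p]).image (fun t => t ++ [p])).card
      = ((F (n-p)).erase [p]).card := fun p =>
    Finset.card_image_of_injective _ (List.append_left_injective [p])
  simp only [himg] at hcard
  have hstep : ∀ p ∈ Finset.Icc ((n+1)/2) n,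
      ((F (n-p)).erase [p]).card + (if n = 2 * p then 1 else 0) = (F (n-p)).card := by
    intro p hp
    simp only [Finset.mem_Icc] at hp
    by_cases h : n = 2 * p
    · have hmem : [p] ∈ F (n - p) := by
        rw [mem_F, singleton_mem_A]; omega
      rw [if_pos h, Finset.card_erase_add_one hmem]
    · have hmem : [p] ∉ F (n - p) := by
        rw [mem_F, singleton_mem_A]; omega
      rw [if_neg h, Finset.erase_eq_of_notMem hmem, Nat.add_zero]
  have hsum1 : ∑ p ∈ Finset.Icc ((n+1)/2) n, (((F (n-p)).erase [p]).card
      + (if n = 2 * p then 1 else 0)) = ∑ p ∈ Finset.Icc ((n+1)/2) n, (F (n-p)).card :=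
    Finset.sum_congr rfl hstep
  rw [Finset.sum_add_distrib] at hsum1
  have hdelta : ∑ p ∈ Finset.Icc ((n+1)/2) n, (if n = 2 * p then 1 else 0)
      = (if Even n then 1 else 0) := by
    rw [Finset.sum_boole]
    push_cast
    have : (Finset.Icc ((n+1)/2) n).filter (fun p => n = 2 * p)
        = if Even n then {n/2} else ∅ := by
      split <;> rename_i h
      · rw [Nat.even_iff] at h
        ext x
        simp only [Finset.mem_filter, Finset.mem_Icc, Finset.mem_singleton]
        omega
      · rw [Nat.even_iff] at h
        ext x
        simp only [Finset.mem_filter, Finset.mem_Icc, Finset.notMem_empty, iff_false]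
        omega
    rw [this]
    split <;> simp
  have hreindex : ∑ p ∈ Finset.Icc ((n+1)/2) n, (F (n-p)).card
      = ∑ r ∈ Finset.range (n/2 + 1), (F r).card := by
    refine Finset.sum_nbij' (fun p => n - p) (fun r => n - r) ?_ ?_ ?_ ?_ ?_
    · intro p hp; simp only [Finset.mem_Icc] at hp; simp only [Finset.mem_range]; omega
    · intro r hr; simp only [Finset.mem_range] at hr; simp only [Finset.mem_Icc]; omega
    · intro p hp; simp only [Finset.mem_Icc] at hp; show n - (n - p) = p; omega
    · intro r hr; simp only [Finset.mem_range] at hr; show n - (n - r) = r; omega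
    · intro p _; rfl
  simp only [card_F]
  omega
lemma b_zero : b 0 = 1 := by
  rw [b_eq]
  have : A 0 = {([] : List ℕ)} := by
    ext l
    simp only [mem_A, Set.mem_singleton_iff]
    constructor
    · rintro ⟨⟨_, hpos⟩, _, hsum⟩
      rcases l with _ | ⟨a, t⟩
      · rfl
      · have := List.sum_eq_zero_iff.mp hsum a (by simp)
        have := hpos a (by simp)
        omega
    · rintro rfl
      exact ⟨⟨by simp, by simp⟩, fun j hj hj' => by simp at hj', rfl⟩
  rw [this, Set.ncard_singleton]

lemma b_one : b 1 = 1 := by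
  have h := rec1 1 (by omega)
  simp [b_zero] at h
  omega

lemma b_two : b 2 = 1 := by
  have h := rec1 2 (by omega)
  rw [if_pos (by decide)] at h
  rw [show (2:ℕ)/2 + 1 = 2 from rfl] at h
  rw [Finset.sum_range_succ, Finset.sum_range_one, b_zero, b_one] at h
  omega

lemma b_odd (k : ℕ) (hk : 1 ≤ k) : b (2*k+1) = b (2*k) + 1 := by
  have h1 := rec1 (2*k+1) (by omega)
  have h2 := rec1 (2*k) (by omega)
  rw [if_neg (by rw [Nat.even_iff]; omega)] at h1
  rw [if_pos (by rw [Nat.even_iff]; omega)] at h2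
  rw [show (2*k+1)/2 = k by omega] at h1
  rw [show (2*k)/2 = k by omega] at h2
  omega

lemma b_even (k : ℕ) (hk : 1 ≤ k) : b (2*k+2) = b (2*k) + b (k+1) := by
  have h1 := rec1 (2*k+2) (by omega)
  have h2 := rec1 (2*k) (by omega)
  rw [if_pos (by rw [Nat.even_iff]; omega)] at h1
  rw [if_pos (by rw [Nat.even_iff]; omega)] at h2
  rw [show (2*k+2)/2 = k+1 by omega] at h1
  rw [show (2*k)/2 = k by omega] at h2
  rw [show k+1+1 = k+2 from rfl, Finset.sum_range_succ] at h1
  omega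

lemma op_two_mul (x : ℕ) (hx : x ≠ 0) :
    2*x / 2^(padicValNat 2 (2*x)) = x / 2^(padicValNat 2 x) := by
  haveI : Fact (Nat.Prime 2) := ⟨Nat.prime_two⟩
  rw [padicValNat.mul (by norm_num) hx, padicValNat.self (by norm_num), pow_add, pow_one,
    Nat.mul_div_mul_left _ _ (by norm_num)]

lemma op_odd (x : ℕ) (h : x % 2 = 1) : x / 2^(padicValNat 2 x) = x := by
  rw [padicValNat.eq_zero_of_not_dvd (by omega)]
  simp

def g (x : ℕ) : ℕ :=
  if x % 2 = 1 then 1 - (x/2) % 2 else (x / 2 ^ (padicValNat 2 x) / 2) % 2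

lemma g_odd (x : ℕ) (h : x % 2 = 1) : g x = 1 - (x/2) % 2 := by
  rw [g, if_pos h]

lemma g_even (y : ℕ) (hy : y ≠ 0) : g (2*y) = ((y / 2^(padicValNat 2 y)) / 2) % 2 := by
  rw [g, if_neg (by omega), op_two_mul y hy]

lemma L (k : ℕ) (hk : 2 ≤ k) :
    (g (k-1) + (if k % 2 = 0 then g (k/2) else g (k/2) + 1)) % 2 = g k := by
  have h4 : k % 4 = 0 ∨ k % 4 = 1 ∨ k % 4 = 2 ∨ k % 4 = 3 := by omega
  rcases h4 with h | h | h | h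
  · -- k = 4s, s ≥ 1
    obtain ⟨s, rfl⟩ : ∃ s, k = 4*s := ⟨k/4, by omega⟩
    have hs : 1 ≤ s := by omega
    have e1 : g (4*s) = ((s / 2^(padicValNat 2 s)) / 2) % 2 := by
      rw [show 4*s = 2*(2*s) by ring, g_even _ (by omega), op_two_mul s (by omega)]
    have e2 : g (4*s - 1) = 0 := by
      rw [g_odd _ (by omega), show (4*s-1)/2 = 2*s - 1 by omega]
      have : (2*s - 1) % 2 = 1 := by omega
      omega
    have e3 : g ((4*s)/2) = ((s / 2^(padicValNat 2 s)) / 2) % 2 := by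
      rw [show (4*s)/2 = 2*s by omega, g_even _ (by omega)]
    rw [if_pos (by omega), e1, e2, e3]
    omega
  · -- k = 4s+1, s ≥ 1
    obtain ⟨s, rfl⟩ : ∃ s, k = 4*s+1 := ⟨k/4, by omega⟩
    have hs : 1 ≤ s := by omega
    have e1 : g (4*s+1) = 1 := by
      rw [g_odd _ (by omega), show (4*s+1)/2 = 2*s by omega]
      omega
    have e2 : g (4*s+1-1) = ((s / 2^(padicValNat 2 s)) / 2) % 2 := by
      rw [show 4*s+1-1 = 2*(2*s) by omega, g_even _ (by omega), op_two_mul s (by omega)]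
    have e3 : g ((4*s+1)/2) = ((s / 2^(padicValNat 2 s)) / 2) % 2 := by
      rw [show (4*s+1)/2 = 2*s by omega, g_even _ (by omega)]
    rw [if_neg (by omega), e1, e2, e3]
    omega
  · -- k = 4s+2
    obtain ⟨s, rfl⟩ : ∃ s, k = 4*s+2 := ⟨k/4, by omega⟩
    have e1 : g (4*s+2) = s % 2 := by
      rw [show 4*s+2 = 2*(2*s+1) by ring, g_even _ (by omega), op_odd (2*s+1) (by omega)]
      rw [show (2*s+1)/2 = s by omega]
    have e2 : g (4*s+2-1) = 1 := by
      rw [show 4*s+2-1 = 4*s+1 by omega, g_odd _ (by omega), show (4*s+1)/2 = 2*s by omega]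
      omega
    have e3 : g ((4*s+2)/2) = 1 - s % 2 := by
      rw [show (4*s+2)/2 = 2*s+1 by omega, g_odd _ (by omega), show (2*s+1)/2 = s by omega]
    rw [if_pos (by omega), e1, e2, e3]
    omega
  · -- k = 4s+3
    obtain ⟨s, rfl⟩ : ∃ s, k = 4*s+3 := ⟨k/4, by omega⟩
    have e1 : g (4*s+3) = 0 := by
      rw [g_odd _ (by omega), show (4*s+3)/2 = 2*s+1 by omega]
      omega
    have e2 : g (4*s+3-1) = s % 2 := by
      rw [show 4*s+3-1 = 2*(2*s+1) by omega, g_even _ (by omega), op_odd (2*s+1) (by omega)]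
      rw [show (2*s+1)/2 = s by omega]
    have e3 : g ((4*s+3)/2) = 1 - s % 2 := by
      rw [show (4*s+3)/2 = 2*s+1 by omega, g_odd _ (by omega), show (2*s+1)/2 = s by omega]
    rw [if_neg (by omega), e1, e2, e3]
    omega

lemma g_one : g 1 = 1 := by rw [g_odd 1 (by omega)]

lemma parity : ∀ k, 1 ≤ k → b (2*k) % 2 = g k := by
  intro k
  induction k using Nat.strong_induction_on with
  | _ k ih =>
    intro hk
    rcases eq_or_lt_of_le hk with h1 | h1
    · rw [← h1, show 2*1 = 2 from rfl, b_two, g_one]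
    · have hb : b (2*k) = b (2*(k-1)) + b k := by
        have h := b_even (k-1) (by omega)
        rw [show 2*(k-1)+2 = 2*k by omega, show k-1+1 = k by omega] at h
        exact h
      have hprev := ih (k-1) (by omega) (by omega)
      have hbk : b k % 2 = (if k % 2 = 0 then g (k/2) else g (k/2) + 1) % 2 := by
        have hgle : g (k/2) ≤ 1 := by
          rw [g]; split <;> omega
        have h2 := ih (k/2) (by omega) (by omega)
        by_cases he : k % 2 = 0
        · rw [if_pos he]
          rw [show 2*(k/2) = k by omega] at h2
          omega
        · rw [if_neg he]
          have hb2 := b_odd (k/2) (by omega)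
          rw [show 2*(k/2)+1 = k by omega] at hb2
          omega
      have hL := L k (by omega)
      omega

end Stmt11Aux

theorem stmt_11 (m : ℕ) (hm : 0 < m) :
    b (8 * m) % 2 = (m / 2 ^ (padicValNat 2 m) / 2) % 2 := by
  open Stmt11Aux in
  have hp := Stmt11Aux.parity (4*m) (by omega)
  rw [show 8*m = 2*(4*m) by ring, hp]
  rw [Stmt11Aux.g, if_neg (by omega), show 4*m = 2*(2*m) by ring,
    Stmt11Aux.op_two_mul (2*m) (by omega), Stmt11Aux.op_two_mul m (by omega)]
end

section
/- The numbers a(n,k) of non-squashing partitions of n into exactly k parts satisfy a(2m,k) = a(2m-1,k) + a(m,k-1) and a(2m+1,k) = a(2m,k) for all m ≥ 1, k ≥ 1, with initial conditions a(0,0) = 1, a(n,0) = 0 for n ≥ 1, a(n,k) = 0 for k > n, and a(n,1) = 1 for n ≥ 1. -/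
/-- Number of non-squashing partitions of n into exactly k parts. -/
noncomputable def a (n k : ℕ) : ℕ :=
  {l : List ℕ | IsPartList l ∧ NSq 2 l ∧ l.sum = n ∧ l.length = k}.ncard

namespace NsqAux

def S (n k : ℕ) : Set (List ℕ) :=
  {l : List ℕ | IsPartList l ∧ NSq 2 l ∧ l.sum = n ∧ l.length = k}

lemma a_eq (n k : ℕ) : a n k = (S n k).ncard := rfl

lemma getD_concat_lt (l : List ℕ) (x j : ℕ) (h : j < l.length) :
    (l ++ [x]).getD j 0 = l.getD j 0 := by
  simp [List.getD_eq_getElem?_getD, List.getElem?_append_left h]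

lemma getD_concat_last (l : List ℕ) (x : ℕ) :
    (l ++ [x]).getD l.length 0 = x := by
  simp [List.getD_eq_getElem?_getD]

lemma single_le_sum' {l : List ℕ} {p : ℕ} (h : p ∈ l) : p ≤ l.sum :=
  List.single_le_sum (by simp) p h

/-- Key characterization of membership for concatenations. -/
lemma mem_concat_iff (d : List ℕ) (x n k : ℕ) :
    (d ++ [x]) ∈ S n (k + 1) ↔
      IsPartList d ∧ NSq 2 d ∧ d.length = k ∧ 0 < x ∧ d.sum ≤ x ∧ d.sum + x = n := by
  constructor
  · rintro ⟨⟨hs, hp⟩, hN, hsum, hlen⟩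
    have hdlen : d.length = k := by simpa using hlen
    have hds : d.Pairwise (· ≤ ·) := by
      rcases List.pairwise_append.mp hs with ⟨h1, _, _⟩
      exact h1
    have hdp : ∀ p ∈ d, 0 < p := fun p hp' => hp p (by simp [hp'])
    have hxpos : 0 < x := hp x (by simp)
    have hle : d.sum ≤ x := by
      rcases Nat.eq_zero_or_pos d.length with h0 | h0
      · have : d = [] := List.length_eq_zero_iff.mp h0
        simp [this]
      · have := hN d.length h0 (by simp)
        rw [List.take_append_of_le_length le_rfl, List.take_length,
          getD_concat_last] at this
        simpa using this
    refine ⟨⟨hds, hdp⟩, ?_, hdlen, hxpos, hle, by simpa using hsum⟩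
    intro j hj hjlen
    have := hN j hj (by simp; omega)
    rwa [List.take_append_of_le_length (le_of_lt hjlen),
      getD_concat_lt _ _ _ hjlen] at this
  · rintro ⟨⟨hs, hp⟩, hN, hlen, hxpos, hle, hsum⟩
    refine ⟨⟨?_, ?_⟩, ?_, by simpa using hsum, by simpa using hlen⟩
    · refine List.pairwise_append.mpr ⟨hs, by simp, ?_⟩
      intro p hp' q hq
      simp at hq
      subst hq
      exact le_trans (single_le_sum' hp') hle
    · intro p hp'
      rcases List.mem_append.mp hp' with h | h
      · exact hp p h
      · simp at h; omega
    · intro j hj hjlen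
      simp at hjlen
      rcases lt_or_eq_of_le hjlen with h | h
      · have := hN j hj h
        rw [List.take_append_of_le_length (le_of_lt h), getD_concat_lt _ _ _ h]
        simpa using this
      · subst h
        rw [List.take_append_of_le_length le_rfl, List.take_length, getD_concat_last]
        simpa using hle

lemma eq_concat_of_mem {l : List ℕ} {n k : ℕ} (h : l ∈ S n (k + 1)) :
    l = l.dropLast ++ [l.getLastD 0] := by
  have hne : l ≠ [] := by
    intro h0
    have := h.2.2.2
    simp [h0] at this
  rw [List.getLastD_eq_getLast?, List.getLast?_eq_getLast hne]
  exact (List.dropLast_append_getLast hne).symm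

lemma concat_inj {d₁ d₂ : List ℕ} {x₁ x₂ : ℕ} (h : d₁ ++ [x₁] = d₂ ++ [x₂]) :
    d₁ = d₂ ∧ x₁ = x₂ := by
  have h1 := congrArg List.dropLast h
  have h2 := congrArg (List.getLastD · 0) h
  simp [List.dropLast_concat] at h1 h2
  exact ⟨h1, h2⟩

lemma S_finite (n k : ℕ) : (S n k).Finite := by
  classical
  set f : List ℕ → List (Fin (n + 1)) :=
    List.map (fun t => (⟨min t n, by omega⟩ : Fin (n + 1))) with hf
  have himg : f '' S n k ⊆ {l : List (Fin (n + 1)) | l.length = k} := by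
    rintro _ ⟨l, hl, rfl⟩
    simp [hf, hl.2.2.2]
  have hfin : (f '' S n k).Finite :=
    Set.Finite.subset (List.finite_length_eq _ k) himg
  have hback : ∀ l ∈ S n k, (f l).map Fin.val = l := by
    intro l hl
    have hb : ∀ t ∈ l, t ≤ n := by
      intro t ht
      calc t ≤ l.sum := single_le_sum' ht
        _ = n := hl.2.2.1
    rw [hf, List.map_map]
    clear hl
    induction l with
    | nil => simp
    | cons a t ih =>
      have ha : a ≤ n := hb a (by simp)
      simp only [List.map_cons, Function.comp_apply]
      rw [ih (fun p hp => hb p (by simp [hp]))]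
      simp [Nat.min_eq_left ha]
  refine Set.Finite.of_finite_image hfin ?_
  intro l₁ h₁ l₂ h₂ heq
  rw [← hback l₁ h₁, ← hback l₂ h₂, heq]

/-- The "add one to the last part" map. -/
def f1 (l : List ℕ) : List ℕ := l.dropLast ++ [l.getLastD 0 + 1]

lemma f1_concat (d : List ℕ) (x : ℕ) : f1 (d ++ [x]) = d ++ [x + 1] := by
  simp [f1, List.dropLast_concat]

lemma f1_injOn (n k : ℕ) : Set.InjOn f1 (S n (k + 1)) := by
  intro l₁ h₁ l₂ h₂ heq
  rw [eq_concat_of_mem h₁, eq_concat_of_mem h₂]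
  rw [eq_concat_of_mem h₁, eq_concat_of_mem h₂, f1_concat, f1_concat] at heq
  obtain ⟨hd, hx⟩ := concat_inj heq
  rw [hd, Nat.succ_injective hx]

lemma image_f1 (m k : ℕ) (hm : 1 ≤ m) : f1 '' S (2 * m) (k + 1) = S (2 * m + 1) (k + 1) := by
  ext l'
  constructor
  · rintro ⟨l, hl, rfl⟩
    have hrep := eq_concat_of_mem hl
    rw [hrep] at hl
    rw [hrep, f1_concat, mem_concat_iff]
    rw [mem_concat_iff] at hl
    obtain ⟨h1, h2, h3, h4, h5, h6⟩ := hl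
    exact ⟨h1, h2, h3, by omega, by omega, by omega⟩
  · intro hl'
    have hrep := eq_concat_of_mem hl'
    set d := l'.dropLast
    set y := l'.getLastD 0
    rw [hrep, mem_concat_iff] at hl'
    obtain ⟨h1, h2, h3, h4, h5, h6⟩ := hl'
    have hy : m + 1 ≤ y := by omega
    refine ⟨d ++ [y - 1], ?_, ?_⟩
    · rw [mem_concat_iff]
      exact ⟨h1, h2, h3, by omega, by omega, by omega⟩
    · rw [f1_concat, hrep]
      congr 1
      simp
      omega

lemma image_f1' (m k : ℕ) (hm : 1 ≤ m) :
    f1 '' S (2 * m - 1) (k + 1) = {l ∈ S (2 * m) (k + 1) | m < l.getLastD 0} := by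
  ext l'
  constructor
  · rintro ⟨l, hl, rfl⟩
    have hrep := eq_concat_of_mem hl
    rw [hrep] at hl
    rw [hrep, f1_concat]
    rw [mem_concat_iff] at hl
    obtain ⟨h1, h2, h3, h4, h5, h6⟩ := hl
    refine ⟨?_, ?_⟩
    · rw [mem_concat_iff]
      exact ⟨h1, h2, h3, by omega, by omega, by omega⟩
    · simp only [List.getLastD_eq_getLast?] at h4 h5 h6 ⊢
      simp
      omega
  · rintro ⟨hl', hlast⟩
    have hrep := eq_concat_of_mem hl'
    set d := l'.dropLast
    set y := l'.getLastD 0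
    rw [hrep, mem_concat_iff] at hl'
    obtain ⟨h1, h2, h3, h4, h5, h6⟩ := hl'
    refine ⟨d ++ [y - 1], ?_, ?_⟩
    · rw [mem_concat_iff]
      exact ⟨h1, h2, h3, by omega, by omega, by omega⟩
    · rw [f1_concat, hrep]
      congr 1
      simp
      omega

lemma image_g (m k : ℕ) (hm : 1 ≤ m) :
    (fun d => d ++ [m]) '' S m k = {l ∈ S (2 * m) (k + 1) | l.getLastD 0 = m} := by
  ext l'
  constructor
  · rintro ⟨d, hd, rfl⟩
    obtain ⟨h1, h2, h3, h4⟩ := hd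
    constructor
    · rw [mem_concat_iff]
      exact ⟨h1, h2, h4, by omega, by omega, by omega⟩
    · simp
  · rintro ⟨hl', hlast⟩
    have hrep := eq_concat_of_mem hl'
    rw [hrep, hlast] at hl' ⊢
    rw [mem_concat_iff] at hl'
    obtain ⟨h1, h2, h3, h4, h5, h6⟩ := hl'
    exact ⟨l'.dropLast, ⟨h1, h2, by omega, h3⟩, rfl⟩

lemma length_le_sum (l : List ℕ) (h : ∀ p ∈ l, 0 < p) : l.length ≤ l.sum := by
  induction l with
  | nil => simp
  | cons a t ih =>
    simp only [List.length_cons, List.sum_cons]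
    have ha := h a (by simp)
    have := ih (fun p hp => h p (by simp [hp]))
    omega

theorem stmt_12 :
    (∀ m k, 1 ≤ m → 1 ≤ k → a (2 * m) k = a (2 * m - 1) k + a m (k - 1)) ∧
    (∀ m k, 1 ≤ m → 1 ≤ k → a (2 * m + 1) k = a (2 * m) k) ∧
    a 0 0 = 1 ∧
    (∀ n, 1 ≤ n → a n 0 = 0) ∧
    (∀ n k, n < k → a n k = 0) ∧
    (∀ n, 1 ≤ n → a n 1 = 1) := by
  refine ⟨?_, ?_, ?_, ?_, ?_, ?_⟩
  · -- a(2m,k) = a(2m-1,k) + a(m,k-1)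
    intro m k hm hk
    obtain ⟨k', rfl⟩ : ∃ k', k = k' + 1 := ⟨k - 1, by omega⟩
    rw [a_eq, a_eq, a_eq]
    have hsplit : S (2 * m) (k' + 1) =
        {l ∈ S (2 * m) (k' + 1) | l.getLastD 0 = m} ∪
        {l ∈ S (2 * m) (k' + 1) | m < l.getLastD 0} := by
      ext l
      simp only [Set.mem_union, Set.mem_setOf_eq, Set.mem_sep_iff]
      constructor
      · intro hl
        have hrep := eq_concat_of_mem hl
        have hl' := hl
        rw [hrep, mem_concat_iff] at hl'
        obtain ⟨h1, h2, h3, h4, h5, h6⟩ := hl'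
        have : m ≤ l.getLastD 0 := by omega
        rcases eq_or_lt_of_le this with h | h
        · exact Or.inl ⟨hl, h.symm⟩
        · exact Or.inr ⟨hl, h⟩
      · rintro (⟨h, _⟩ | ⟨h, _⟩) <;> exact h
    have hdisj : Disjoint {l ∈ S (2 * m) (k' + 1) | l.getLastD 0 = m}
        {l ∈ S (2 * m) (k' + 1) | m < l.getLastD 0} := by
      rw [Set.disjoint_left]
      rintro l ⟨_, h1⟩ ⟨_, h2⟩
      omega
    rw [hsplit, Set.ncard_union_eq hdisj
      ((S_finite _ _).subset (Set.sep_subset _ _))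
      ((S_finite _ _).subset (Set.sep_subset _ _))]
    rw [← image_g m k' hm, ← image_f1' m k' hm]
    rw [Set.ncard_image_of_injOn (f1_injOn _ _),
      Set.ncard_image_of_injOn (fun l₁ _ l₂ _ h => (concat_inj h).1)]
    have : k' + 1 - 1 = k' := by omega
    rw [this]
    omega
  · -- a(2m+1,k) = a(2m,k)
    intro m k hm hk
    obtain ⟨k', rfl⟩ : ∃ k', k = k' + 1 := ⟨k - 1, by omega⟩
    rw [a_eq, a_eq, ← image_f1 m k' hm, Set.ncard_image_of_injOn (f1_injOn _ _)]
  · -- a 0 0 = 1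
    rw [a_eq]
    have : S 0 0 = {([] : List ℕ)} := by
      ext l
      constructor
      · rintro ⟨_, _, _, hlen⟩
        simpa using List.length_eq_zero_iff.mp hlen
      · rintro rfl
        exact ⟨⟨by simp, by simp⟩, fun j hj hjl => by simp at hjl, by simp, by simp⟩
    rw [this, Set.ncard_singleton]
  · -- a n 0 = 0 for n ≥ 1
    intro n hn
    rw [a_eq]
    have : S n 0 = ∅ := by
      ext l
      simp only [Set.mem_empty_iff_false, iff_false]
      rintro ⟨_, _, hsum, hlen⟩
      rw [List.length_eq_zero_iff.mp hlen] at hsum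
      simp at hsum
      omega
    rw [this, Set.ncard_empty]
  · -- a n k = 0 for n < k
    intro n k hnk
    rw [a_eq]
    have : S n k = ∅ := by
      ext l
      simp only [Set.mem_empty_iff_false, iff_false]
      rintro ⟨⟨_, hp⟩, _, hsum, hlen⟩
      have := length_le_sum l hp
      omega
    rw [this, Set.ncard_empty]
  · -- a n 1 = 1 for n ≥ 1
    intro n hn
    rw [a_eq]
    have : S n 1 = {[n]} := by
      ext l
      constructor
      · intro hl
        have hrep := eq_concat_of_mem (k := 0) hl
        rw [hrep, mem_concat_iff] at hl
        obtain ⟨_, _, h3, h4, h5, h6⟩ := hl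
        have hd : l.dropLast = [] := List.length_eq_zero_iff.mp h3
        rw [hrep, hd]
        simp at h6 ⊢
        rw [hd] at h6
        simp at h6
        omega
      · rintro rfl
        have : [n] = [] ++ [n] := by simp
        rw [this, mem_concat_iff]
        refine ⟨⟨by simp, by simp⟩, fun j hj hjl => by simp at hjl, by simp, by omega, by simp, by simp⟩
    rw [this, Set.ncard_singleton]

end NsqAux

theorem stmt_12 :
    (∀ m k, 1 ≤ m → 1 ≤ k → a (2 * m) k = a (2 * m - 1) k + a m (k - 1)) ∧
    (∀ m k, 1 ≤ m → 1 ≤ k → a (2 * m + 1) k = a (2 * m) k) ∧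
    a 0 0 = 1 ∧
    (∀ n, 1 ≤ n → a n 0 = 0) ∧
    (∀ n k, n < k → a n k = 0) ∧
    (∀ n, 1 ≤ n → a n 1 = 1) := NsqAux.stmt_12
end

section
/- For k ≥ 1, the number of non-squashing partitions of n into exactly k parts equals the number of partitions of n - 2^{k-1} into powers of 2 not exceeding 2^{k-1} (and is 0 if n < 2^{k-1}). -/
/-! ### Auxiliary definitions -/

def Aset (n k : ℕ) : Set (List ℕ) :=
  {l : List ℕ | IsPartList l ∧ NSq 2 l ∧ l.sum = n ∧ l.length = k}

def Bset (K m : ℕ) : Set (List ℕ) :=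
  {l : List ℕ | IsPartList l ∧ (∀ p ∈ l, ∃ i, p = 2 ^ i ∧ p ≤ 2 ^ K) ∧ l.sum = m}

/-- The bijection, on reversed lists (largest part first). -/
def psi : List ℕ → List ℕ
  | [] => []
  | [p] => List.replicate (p - 1) 1
  | p :: q :: r => List.replicate (p - (q :: r).sum) 1 ++ (psi (q :: r)).map (2 * ·)

noncomputable def Phi (l : List ℕ) : List ℕ := psi l.reverse

lemma sum_map_two (l : List ℕ) : (l.map (2 * ·)).sum = 2 * l.sum := by
  induction l with
  | nil => simp
  | cons x r ih => simp [ih]; ring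

lemma phi_append (l' : List ℕ) (h : l' ≠ []) (p : ℕ) :
    Phi (l' ++ [p]) = List.replicate (p - l'.sum) 1 ++ (Phi l').map (2 * ·) := by
  obtain ⟨q, r, hqr⟩ : ∃ q r, l'.reverse = q :: r := by
    cases hrev : l'.reverse with
    | nil => exact absurd (by simpa using hrev) h
    | cons q r => exact ⟨q, r, rfl⟩
  have hsum : (q :: r).sum = l'.sum := by rw [← hqr, List.sum_reverse]
  unfold Phi
  rw [List.reverse_append, List.reverse_singleton, List.singleton_append, hqr, psi, hsum]

lemma NSq_append {l' : List ℕ} {p : ℕ} :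
    NSq 2 (l' ++ [p]) ↔ NSq 2 l' ∧ l'.sum ≤ p := by
  constructor
  · intro h
    constructor
    · intro j hj hjl
      have := h j hj (by simp; omega)
      rwa [List.take_append_of_le_length (by omega),
        List.getD_append _ _ _ _ (by omega)] at this
    · rcases List.eq_nil_or_concat l' with rfl | ⟨l'', q, hcat⟩
      · simp
      · have hlen : 0 < l'.length := by rw [hcat]; simp
        have := h l'.length hlen (by simp)
        rw [List.take_append_of_le_length le_rfl, List.take_length,
          List.getD_append_right _ _ _ _ le_rfl, Nat.sub_self] at this
        simp at this
        omega
  · rintro ⟨h1, h2⟩ j hj hjl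
    simp only [List.length_append, List.length_singleton] at hjl
    rcases lt_or_ge j l'.length with hlt | hge
    · rw [List.take_append_of_le_length (by omega), List.getD_append _ _ _ _ hlt]
      exact h1 j hj hlt
    · have hj' : j = l'.length := by omega
      subst hj'
      rw [List.take_append_of_le_length le_rfl, List.take_length,
        List.getD_append_right _ _ _ _ le_rfl, Nat.sub_self]
      simp
      omega

lemma A_elim {n k : ℕ} {l' : List ℕ} {p : ℕ} (h : l' ++ [p] ∈ Aset n (k + 1)) :
    l' ∈ Aset l'.sum k ∧ l'.sum ≤ p ∧ n = l'.sum + p := by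
  obtain ⟨⟨hs, hpos⟩, hn, hsum, hlen⟩ := h
  obtain ⟨hn1, hn2⟩ := NSq_append.mp hn
  refine ⟨⟨⟨hs.sublist (List.sublist_append_left _ _), fun x hx => hpos x (by simp [hx])⟩,
    hn1, rfl, by simpa using hlen⟩, hn2, by simp at hsum; omega⟩

lemma sum_pos_of_mem {k : ℕ} {l' : List ℕ} (h : l' ∈ Aset l'.sum k) (hk : 1 ≤ k) :
    1 ≤ l'.sum := by
  obtain ⟨⟨_, hpos⟩, _, _, hlen⟩ := h
  have : l' ≠ [] := by intro hl; rw [hl] at hlen; simp at hlen; omega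
  obtain ⟨x, hx⟩ := List.exists_mem_of_ne_nil l' this
  calc 1 ≤ x := hpos x hx
    _ ≤ l'.sum := List.single_le_sum (fun y _ => Nat.zero_le y) x hx

lemma A_intro {k p : ℕ} {l' : List ℕ} (h : l' ∈ Aset l'.sum k) (hk : 1 ≤ k)
    (hsp : l'.sum ≤ p) : l' ++ [p] ∈ Aset (l'.sum + p) (k + 1) := by
  obtain ⟨⟨hs, hpos⟩, hn, -, hlen⟩ := h
  have hp1 : 1 ≤ p := le_trans (sum_pos_of_mem ⟨⟨hs, hpos⟩, hn, rfl, hlen⟩ hk) hsp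
  refine ⟨⟨List.pairwise_append.mpr ⟨hs, List.pairwise_singleton _ _, ?_⟩, ?_⟩,
    NSq_append.mpr ⟨hn, hsp⟩, by simp, by simp [hlen]⟩
  · intro x hx b hb
    simp at hb; subst hb
    exact le_trans (List.single_le_sum (fun y _ => Nat.zero_le y) x hx) hsp
  · intro x hx
    simp at hx
    rcases hx with hx | rfl
    · exact hpos x hx
    · exact hp1

lemma A_sum_lb : ∀ k, 1 ≤ k → ∀ n, ∀ l ∈ Aset n k, 2 ^ (k - 1) ≤ n := by
  intro k hk
  induction k, hk using Nat.le_induction with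
  | base =>
    intro n l hl
    have hsum := hl.2.2.1
    have h1 : (1:ℕ) ≤ l.sum := sum_pos_of_mem (by rw [hsum]; exact hl) le_rfl
    have h2 : (2:ℕ) ^ (1 - 1) = 1 := by norm_num
    omega
  | succ k hk IH =>
    intro n l hl
    have hne : l ≠ [] := by
      intro h; rw [h] at hl; obtain ⟨_, _, _, hlen⟩ := hl; simp at hlen
    obtain ⟨h1, h2, h3⟩ := A_elim (l' := l.dropLast) (p := l.getLast hne)
      (by rwa [List.dropLast_append_getLast hne])
    have := IH _ _ h1
    have h2k : 2 ^ (k + 1 - 1) = 2 * 2 ^ (k - 1) := by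
      rw [Nat.add_sub_cancel, ← pow_succ']
      congr 1; omega
    omega

lemma replicate_mem_B (c K : ℕ) : List.replicate c 1 ∈ Bset K c := by
  refine ⟨⟨List.pairwise_replicate.mpr (Or.inr le_rfl), fun p hp => ?_⟩, fun p hp => ?_, by simp⟩
  · rw [List.eq_of_mem_replicate hp]; norm_num
  · rw [List.eq_of_mem_replicate hp]
    exact ⟨0, rfl, Nat.one_le_two_pow⟩

lemma split_ones (r : List ℕ) (hs : r.Pairwise (· ≤ ·)) (hp : ∀ x ∈ r, 0 < x) :
    r = List.replicate (r.count 1) 1 ++ r.filter (fun x => 1 < x) := by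
  induction r with
  | nil => simp
  | cons x r ih =>
    have hs' : r.Pairwise (· ≤ ·) := hs.of_cons
    have hle : ∀ y ∈ r, x ≤ y := fun y hy => List.rel_of_pairwise_cons hs hy
    rcases Nat.lt_or_ge 1 x with hx | hx
    · have hall : ∀ y ∈ x :: r, 1 < y := by
        intro y hy; simp at hy
        rcases hy with rfl | hy
        · exact hx
        · exact lt_of_lt_of_le hx (hle y hy)
      have hc : (x :: r).count 1 = 0 := List.count_eq_zero.mpr (fun h => by
        have := hall 1 h; omega)
      have hf : (x :: r).filter (fun x => 1 < x) = x :: r :=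
        List.filter_eq_self.mpr (fun y hy => by simpa using hall y hy)
      rw [hc, hf]; simp
    · have hx1 : x = 1 := by have := hp x (by simp); omega
      subst hx1
      have : (1 :: r).count 1 = r.count 1 + 1 := by simp
      rw [this, List.replicate_succ]
      simp only [List.cons_append]
      congr 1
      rw [List.filter_cons, if_neg (by simp)]
      exact ih hs' (fun y hy => hp y (by simp [hy]))

lemma replicate_append_cancel {c1 c2 : ℕ} {m1 m2 : List ℕ}
    (h1 : ∀ x ∈ m1, x ≠ 1) (h2 : ∀ x ∈ m2, x ≠ 1)
    (h : List.replicate c1 1 ++ m1 = List.replicate c2 1 ++ m2) : c1 = c2 ∧ m1 = m2 := by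
  have hm1 : m1.count 1 = 0 := List.count_eq_zero.mpr (fun hx => h1 _ hx rfl)
  have hm2 : m2.count 1 = 0 := List.count_eq_zero.mpr (fun hx => h2 _ hx rfl)
  have hc : c1 = c2 := by
    have := congrArg (List.count 1) h
    simpa [List.count_append, hm1, hm2] using this
  subst hc
  exact ⟨rfl, List.append_cancel_left h⟩

lemma main : ∀ k, 1 ≤ k →
    (∀ n, ∀ l ∈ Aset n k, Phi l ∈ Bset (k - 1) (n - 2 ^ (k - 1))) ∧
    (∀ n, Set.InjOn Phi (Aset n k)) ∧
    (∀ n, 2 ^ (k - 1) ≤ n → Set.SurjOn Phi (Aset n k) (Bset (k - 1) (n - 2 ^ (k - 1)))) := by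
  intro k hk
  induction k, hk using Nat.le_induction with
  | base =>
    have hform : ∀ n, ∀ l ∈ Aset n 1, l = [n] ∧ 1 ≤ n := by
      intro n l hl
      obtain ⟨⟨_, hpos⟩, _, hsum, hlen⟩ := hl
      obtain ⟨x, rfl⟩ := List.length_eq_one_iff.mp hlen
      simp at hsum; subst hsum
      exact ⟨rfl, hpos _ (by simp)⟩
    refine ⟨?_, ?_, ?_⟩
    · intro n l hl
      obtain ⟨rfl, hn⟩ := hform n l hl
      show psi [n].reverse ∈ _
      rw [List.reverse_singleton]
      show List.replicate (n - 1) 1 ∈ Bset 0 (n - 1)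
      exact replicate_mem_B _ _
    · intro n l1 hl1 l2 hl2 _
      rw [(hform n l1 hl1).1, (hform n l2 hl2).1]
    · intro n hn r hr
      obtain ⟨⟨_, hpos⟩, hpow, hsum⟩ := hr
      have hall : ∀ x ∈ r, x = 1 := by
        intro x hx
        obtain ⟨i, rfl, hle⟩ := hpow x hx
        have := Nat.one_le_two_pow (n := i)
        simp at hle; omega
      have hrep : r = List.replicate (n - 1) 1 := by
        have h1 : r = List.replicate r.length 1 :=
          List.eq_replicate_iff.mpr ⟨rfl, hall⟩
        have h2 : r.sum = r.length := by
          conv_lhs => rw [h1]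
          simp
        rw [h1]
        congr 1
        rw [← h2, hsum]
        norm_num
      refine ⟨[n], ⟨⟨List.pairwise_singleton _ _, fun p hp => by simp at hp; omega⟩,
        fun j hj hjl => by simp at hjl; omega, by simp, rfl⟩, ?_⟩
      show psi [n].reverse = r
      rw [List.reverse_singleton]
      show List.replicate (n - 1) 1 = r
      rw [hrep]
  | succ k hk IH =>
    obtain ⟨IHmap, IHinj, IHsur⟩ := IH
    have h2k : (2:ℕ) ^ (k + 1 - 1) = 2 * 2 ^ (k - 1) := by
      rw [Nat.add_sub_cancel, ← pow_succ']
      congr 1; omega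
    have hBpos : ∀ K m, ∀ r ∈ Bset K m, ∀ x ∈ r, 0 < x := fun K m r hr => hr.1.2
    -- decomposition of elements of Aset n (k+1)
    have hdec : ∀ n, ∀ l ∈ Aset n (k + 1), ∃ l' p, l = l' ++ [p] ∧ l' ≠ [] ∧
        l' ∈ Aset l'.sum k ∧ l'.sum ≤ p ∧ n = l'.sum + p ∧
        2 ^ (k - 1) ≤ l'.sum := by
      intro n l hl
      have hne : l ≠ [] := by
        intro h; rw [h] at hl; obtain ⟨_, _, _, hlen⟩ := hl; simp at hlen
      obtain ⟨h1, h2, h3⟩ := A_elim (l' := l.dropLast) (p := l.getLast hne)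
        (by rwa [List.dropLast_append_getLast hne])
      refine ⟨l.dropLast, l.getLast hne, (List.dropLast_append_getLast hne).symm, ?_, h1, h2, h3,
        A_sum_lb k hk _ _ h1⟩
      intro hd
      rw [hd] at h1
      obtain ⟨_, _, _, hlen⟩ := h1
      simp at hlen; omega
    -- the image formula for such l
    have himg : ∀ n, ∀ l ∈ Aset n (k + 1),
        Phi l ∈ Bset k (n - 2 ^ (k + 1 - 1)) := by
      intro n l hl
      obtain ⟨l', p, rfl, hne, hA, hsp, hn, hlb⟩ := hdec n l hl
      have hB := IHmap _ _ hA
      obtain ⟨⟨hBs, hBp⟩, hBpow, hBsum⟩ := hB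
      rw [phi_append l' hne p]
      refine ⟨⟨?_, ?_⟩, ?_, ?_⟩
      · refine List.pairwise_append.mpr ⟨List.pairwise_replicate.mpr (Or.inr le_rfl), ?_, ?_⟩
        · exact List.Pairwise.map _ (fun a b hab => by omega) hBs
        · intro x hx b hb
          rw [List.eq_of_mem_replicate hx]
          obtain ⟨y, hy, rfl⟩ := List.mem_map.mp hb
          have := hBp y hy; omega
      · intro x hx
        rw [List.mem_append] at hx
        rcases hx with hx | hx
        · rw [List.eq_of_mem_replicate hx]; norm_num
        · obtain ⟨y, hy, rfl⟩ := List.mem_map.mp hx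
          have := hBp y hy
          show 0 < 2 * y
          omega
      · intro x hx
        rw [List.mem_append] at hx
        rcases hx with hx | hx
        · rw [List.eq_of_mem_replicate hx]
          exact ⟨0, rfl, Nat.one_le_two_pow⟩
        · obtain ⟨y, hy, rfl⟩ := List.mem_map.mp hx
          obtain ⟨i, rfl, hle⟩ := hBpow y hy
          refine ⟨i + 1, by ring, ?_⟩
          calc (2:ℕ) * 2 ^ i ≤ 2 * 2 ^ (k - 1) := by omega
            _ = 2 ^ (k + 1 - 1) := h2k.symm
            _ = 2 ^ k := by norm_num
      · rw [List.sum_append, List.sum_replicate, sum_map_two, hBsum, smul_eq_mul, mul_one]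
        omega
    refine ⟨himg, ?_, ?_⟩
    · -- injectivity
      intro n l1 hl1 l2 hl2 heq
      obtain ⟨l1', p1, rfl, hne1, hA1, hsp1, hn1, hlb1⟩ := hdec n l1 hl1
      obtain ⟨l2', p2, rfl, hne2, hA2, hsp2, hn2, hlb2⟩ := hdec n l2 hl2
      rw [phi_append l1' hne1 p1, phi_append l2' hne2 p2] at heq
      have hB1 := IHmap _ _ hA1
      have hB2 := IHmap _ _ hA2
      have hmne : ∀ (l' : List ℕ) s, Phi l' ∈ Bset (k-1) s →
          ∀ x ∈ (Phi l').map (2 * ·), x ≠ 1 := by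
        intro l' s hB x hx
        obtain ⟨y, hy, rfl⟩ := List.mem_map.mp hx
        have := hB.1.2 y hy; omega
      obtain ⟨hc, hm⟩ := replicate_append_cancel (hmne _ _ hB1) (hmne _ _ hB2) heq
      have hPhi : Phi l1' = Phi l2' :=
        List.map_injective_iff.mpr (fun a b h => Nat.eq_of_mul_eq_mul_left (by norm_num) h) hm
      have hsums : l1'.sum = l2'.sum := by
        have e1 : (Phi l1').sum = l1'.sum - 2 ^ (k - 1) := hB1.2.2
        have e2 : (Phi l2').sum = l2'.sum - 2 ^ (k - 1) := hB2.2.2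
        rw [hPhi, e2] at e1
        omega
      have : l1' = l2' := IHinj l1'.sum hA1 (by rw [hsums]; exact hA2) hPhi
      have hp : p1 = p2 := by omega
      rw [this, hp]
    · -- surjectivity
      intro n hn r hr
      obtain ⟨⟨hrs, hrp⟩, hrpow, hrsum⟩ := hr
      rw [Nat.add_sub_cancel] at hrpow
      set m := n - 2 ^ (k + 1 - 1) with hm
      set c := r.count 1 with hc
      set d := r.filter (fun x => 1 < x) with hd
      have hsplit : r = List.replicate c 1 ++ d := split_ones r hrs hrp
      have hdmem : ∀ x ∈ d, ∃ j, x = 2 ^ (j + 1) ∧ x ≤ 2 ^ k := by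
        intro x hx
        have hxr : x ∈ r := List.mem_of_mem_filter hx
        have hx1 : 1 < x := by have := List.of_mem_filter hx; simpa using this
        obtain ⟨i, rfl, hle⟩ := hrpow x hxr
        cases i with
        | zero => simp at hx1
        | succ j => exact ⟨j, rfl, hle⟩
      set d' := d.map (· / 2) with hd'
      have hdd : d = d'.map (2 * ·) := by
        rw [hd', List.map_map]
        conv_lhs => rw [← List.map_id d]
        refine (List.map_congr_left ?_).symm
        intro x hx
        obtain ⟨j, rfl, _⟩ := hdmem x hx
        simp [pow_succ]; ring
      set t := d'.sum with ht
      have hdsum : d.sum = 2 * t := by rw [hdd, sum_map_two]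
      have hd'B : d' ∈ Bset (k - 1) t := by
        refine ⟨⟨?_, ?_⟩, ?_, rfl⟩
        · exact List.Pairwise.map _ (fun a b hab => Nat.div_le_div_right hab)
            (hrs.sublist (List.filter_sublist (l := r)))
        · intro x hx
          obtain ⟨y, hy, rfl⟩ := List.mem_map.mp hx
          obtain ⟨j, rfl, _⟩ := hdmem y hy
          have : 2 ^ (j + 1) / 2 = 2 ^ j := by
            rw [pow_succ]; omega
          rw [this]
          exact Nat.pow_pos (by norm_num)
        · intro x hx
          obtain ⟨y, hy, rfl⟩ := List.mem_map.mp hx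
          obtain ⟨j, rfl, hle⟩ := hdmem y hy
          have hdiv : 2 ^ (j + 1) / 2 = 2 ^ j := by rw [pow_succ]; omega
          rw [hdiv]
          refine ⟨j, rfl, ?_⟩
          have hjk : j + 1 ≤ k := (Nat.pow_le_pow_iff_right one_lt_two).mp hle
          exact Nat.pow_le_pow_right (by norm_num) (by omega)
      have hrsum' : c + 2 * t = m := by
        rw [← hrsum, hsplit]
        simp [hdsum]
      set s := t + 2 ^ (k - 1) with hs
      have hd'mem : d' ∈ Bset (k - 1) (s - 2 ^ (k - 1)) := by
        rw [show s - 2 ^ (k - 1) = t by omega]; exact hd'B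
      obtain ⟨l', hl'A, hl'Phi⟩ := IHsur s (by omega) hd'mem
      have hl'sum : l'.sum = s := hl'A.2.2.1
      have hl'ne : l' ≠ [] := by
        intro h; rw [h] at hl'A; obtain ⟨_, _, _, hlen⟩ := hl'A; simp at hlen; omega
      set p := n - s with hp
      have hfacts : 2 * 2 ^ (k - 1) = 2 ^ (k + 1 - 1) ∧ 2 ^ (k + 1 - 1) ≤ n := ⟨h2k.symm, hn⟩
      have hsp : s ≤ p := by omega
      have hA' : l' ++ [p] ∈ Aset n (k + 1) := by
        have := A_intro (l' := l') (by rw [hl'sum]; exact hl'A) hk (p := p) (by rw [hl'sum]; omega)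
        rwa [hl'sum, show s + p = n by omega] at this
      refine ⟨l' ++ [p], hA', ?_⟩
      show Phi (l' ++ [p]) = r
      rw [phi_append l' hl'ne p, hl'sum, hl'Phi, ← hdd,
        show p - s = c by omega, ← hsplit]

theorem stmt_13 (n k : ℕ) (hk : 1 ≤ k) :
    (n < 2 ^ (k - 1) → a n k = 0) ∧
    (2 ^ (k - 1) ≤ n →
      a n k = {l : List ℕ | IsPartList l ∧ (∀ p ∈ l, ∃ i, p = 2 ^ i ∧ p ≤ 2 ^ (k - 1)) ∧
        l.sum = n - 2 ^ (k - 1)}.ncard) := by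
  obtain ⟨Hmap, Hinj, Hsur⟩ := main k hk
  constructor
  · intro hlt
    have : Aset n k = ∅ := by
      ext l
      simp only [Set.mem_empty_iff_false, iff_false]
      intro hl
      exact absurd (A_sum_lb k hk n l hl) (by omega)
    show (Aset n k).ncard = 0
    rw [this]; simp
  · intro hle
    have himg : Phi '' Aset n k = Bset (k - 1) (n - 2 ^ (k - 1)) := by
      apply Set.Subset.antisymm
      · rintro _ ⟨l, hl, rfl⟩
        exact Hmap n l hl
      · exact Hsur n hle
    calc a n k = (Aset n k).ncard := rfl
      _ = (Phi '' Aset n k).ncard := (Set.ncard_image_of_injOn (Hinj n)).symm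
      _ = (Bset (k - 1) (n - 2 ^ (k - 1))).ncard := by rw [himg]
      _ = _ := rfl
end
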